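/- arXiv:2005.09770 — 4 statements merged into one kernel-verified Lean document; each statement's English description precedes it below -/
import Mathlib

section
/- Let K = ℚ₂(√-1), with ring of integers 𝒪 and uniformizer π = 1 + √-1. Then the equation x₀⁶ + π x₁⁶ + π² x₂⁶ + π³ x₃⁶ + π⁴ x₄⁶ + π⁵ x₅⁶ = 0 has no solution (x₀,…,x₅) ∈ 𝒪⁶ other than the trivial one x₀ = ⋯ = x₅ = 0. -/
open Polynomial Finset

section Defs
variable {A : Type*} [CommRing A] [Algebra ℤ_[2] A]

/-- `x` belongs to the ring of integers `𝒪` (the integral closure of `ℤ₂`). -/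
def inO (x : A) : Prop := IsIntegral ℤ_[2] x

/-- `x` is divisible by `π ^ n` within the ring of integers, i.e. the normalized
valuation of `x` is at least `n`. -/
def pdvd (π : A) (n : ℕ) (x : A) : Prop := ∃ y : A, inO y ∧ x = π ^ n * y

/-- `x` is a unit of the ring of integers. -/
def isUnitO (x : A) : Prop := inO x ∧ ∃ y : A, inO y ∧ x * y = 1

/-- `π` is a uniformizer: a generator of the maximal ideal (= set of nonunits) of `𝒪`. -/
def IsUniformizerO (π : A) : Prop :=
  inO π ∧ ¬ isUnitO π ∧ ∀ x : A, inO x → ¬ isUnitO x → pdvd π 1 x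

/-- the normalized valuation of `a` equals `r`. -/
def hasVal (π : A) (r : ℕ) (a : A) : Prop := pdvd π r a ∧ ¬ pdvd π (r + 1) a

/-- `a` is at level `k` : its valuation is congruent to `k` mod `6`. -/
def atLevel (π : A) (k : ℕ) (a : A) : Prop := ∃ r : ℕ, r % 6 = k % 6 ∧ hasVal π r a

/-- `a` and `b` are both at level `k` and have the same `π`-coefficient. -/
def SameCoeff (π : A) (k : ℕ) (a b : A) : Prop :=
  ∃ (r s : ℕ) (u w : A), r % 6 = k % 6 ∧ s % 6 = k % 6 ∧ isUnitO u ∧ isUnitO w ∧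
    a = π ^ r * u ∧ b = π ^ s * w ∧ pdvd π 2 (u - w)

/-- `a` and `b` are both at level `k` and have different `π`-coefficients. -/
def DiffCoeff (π : A) (k : ℕ) (a b : A) : Prop :=
  ∃ (r s : ℕ) (u w : A), r % 6 = k % 6 ∧ s % 6 = k % 6 ∧ isUnitO u ∧ isUnitO w ∧
    a = π ^ r * u ∧ b = π ^ s * w ∧ ¬ pdvd π 2 (u - w)

end Defs

/-- `Kd d` is the quadratic extension `ℚ₂(√d)` of the `2`-adic numbers. -/
noncomputable abbrev Kd (d : ℚ_[2]) : Type := AdjoinRoot (X ^ 2 - C d)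

noncomputable instance (d : ℚ_[2]) : Algebra ℤ_[2] (Kd d) :=
  ((algebraMap ℚ_[2] (Kd d)).comp (algebraMap ℤ_[2] ℚ_[2])).toAlgebra

/-- the additive sextic form `∑ aᵢ xᵢ⁶` in seven variables has a nontrivial zero over `𝒪`. -/
def HasNontrivialZero {d : ℚ_[2]} (a : Fin 7 → Kd d) : Prop :=
  ∃ x : Fin 7 → Kd d, (∀ i, inO (x i)) ∧ x ≠ 0 ∧ ∑ i, a i * x i ^ 6 = 0

namespace SexticAux

noncomputable def ρ : Kd (-1) := AdjoinRoot.root (X ^ 2 - C (-1 : ℚ_[2]))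
noncomputable def ι : ℚ_[2] →+* Kd (-1) := algebraMap ℚ_[2] (Kd (-1))

lemma fmonic : (X ^ 2 - C (-1 : ℚ_[2])).Monic := monic_X_pow_sub_C _ (by norm_num)
lemma fdeg : (X ^ 2 - C (-1 : ℚ_[2])).degree = 2 := degree_X_pow_sub_C (by norm_num) _

lemma mk_lin (a b : ℚ_[2]) :
    AdjoinRoot.mk (X ^ 2 - C (-1 : ℚ_[2])) (C a + C b * X) = ι a + ι b * ρ := by
  simp only [map_add, map_mul, AdjoinRoot.mk_C, AdjoinRoot.mk_X]
  rfl

lemma rho_sq : ρ ^ 2 = ι (-1) := by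
  have h : AdjoinRoot.mk (X ^ 2 - C (-1 : ℚ_[2])) (X ^ 2 - C (-1)) = 0 := AdjoinRoot.mk_self
  rw [map_sub, sub_eq_zero, map_pow, AdjoinRoot.mk_X, AdjoinRoot.mk_C] at h
  exact h

lemma rho_sq' : ρ ^ 2 = -1 := by rw [rho_sq, map_neg, map_one]

lemma exists_coords (z : Kd (-1)) : ∃ a b : ℚ_[2], z = ι a + ι b * ρ := by
  obtain ⟨p, rfl⟩ := AdjoinRoot.mk_surjective z
  refine ⟨(p %ₘ (X ^ 2 - C (-1 : ℚ_[2]))).coeff 0, (p %ₘ (X ^ 2 - C (-1 : ℚ_[2]))).coeff 1, ?_⟩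
  conv_lhs => rw [← modByMonic_add_div p (X ^ 2 - C (-1 : ℚ_[2]))]
  have hdeg : (p %ₘ (X ^ 2 - C (-1 : ℚ_[2]))).degree ≤ 1 := by
    have := degree_modByMonic_lt p fmonic
    rw [fdeg] at this
    exact Order.le_of_lt_succ (by exact_mod_cast this)
  rw [map_add, map_mul, AdjoinRoot.mk_self, zero_mul, add_zero]
  conv_lhs => rw [eq_X_add_C_of_degree_le_one hdeg]
  rw [← mk_lin]
  congr 1
  ring

lemma coords_inj {a b c d : ℚ_[2]} (h : ι a + ι b * ρ = ι c + ι d * ρ) : a = c ∧ b = d := by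
  have h0 : AdjoinRoot.mk (X ^ 2 - C (-1 : ℚ_[2])) (C (a - c) + C (b - d) * X) = 0 := by
    rw [mk_lin, map_sub, map_sub]
    rw [← sub_eq_zero] at h; rw [← h]; ring
  rw [AdjoinRoot.mk_eq_zero] at h0
  have hq : (C (a - c) + C (b - d) * X : ℚ_[2][X]) = 0 := by
    refine eq_zero_of_dvd_of_degree_lt h0 ?_
    rw [fdeg]
    calc (C (a - c) + C (b - d) * X : ℚ_[2][X]).degree
        ≤ max (C (a - c) : ℚ_[2][X]).degree ((C (b - d) * X : ℚ_[2][X])).degree := degree_add_le _ _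
      _ < 2 := by
          apply max_lt
          · exact lt_of_le_of_lt degree_C_le (by norm_num)
          · exact lt_of_le_of_lt (degree_C_mul_X_le _) (by norm_num)
  constructor
  · have := congrArg (fun q => Polynomial.coeff q 0) hq
    simpa [sub_eq_zero] using this
  · have := congrArg (fun q => Polynomial.coeff q 1) hq
    simpa [sub_eq_zero] using this

lemma key (t : ℚ_[2]) (ht : ‖t‖ ≤ 1) : (2:ℝ)⁻¹ ≤ ‖1 + t^2‖ := by
  by_contra hcon
  push_neg at hcon
  set T : ℤ_[2] := ⟨t, ht⟩ with hT
  have hc : ((1 + T^2 : ℤ_[2]) : ℚ_[2]) = 1 + t^2 := by push_cast [hT, PadicInt.coe_pow]; rfl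
  have h2 : ‖1 + t^2‖ ≤ ((2:ℕ):ℝ)^(-(2:ℕ):ℤ) := by
    rw [Padic.norm_le_pow_iff_norm_lt_pow_add_one]
    calc ‖1+t^2‖ < 2⁻¹ := hcon
      _ = ((2:ℕ):ℝ)^((-(2:ℕ):ℤ) + 1) := by norm_num
  have h3 : ‖(1 + T^2 : ℤ_[2])‖ ≤ ((2:ℕ):ℝ)^(-(2:ℕ):ℤ) := by rw [PadicInt.norm_def, hc]; exact h2
  have hmem := (PadicInt.norm_le_pow_iff_mem_span_pow (1 + T^2) 2).1 h3
  rw [← PadicInt.ker_toZModPow, RingHom.mem_ker, map_add, map_one, map_pow] at hmem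
  revert hmem
  generalize (PadicInt.toZModPow 2 T) = s
  revert s
  decide

lemma max_sq_le (a b : ℚ_[2]) : max ‖a‖ ‖b‖ ^ 2 ≤ 2 * ‖a^2 + b^2‖ := by
  wlog hba : ‖b‖ ≤ ‖a‖ with H
  · have := H b a (le_of_not_ge hba)
    rwa [max_comm, add_comm] at this
  rw [max_eq_left hba]
  rcases eq_or_ne a 0 with rfl | ha
  · simp only [norm_zero] at hba ⊢
    have : ‖b‖ = 0 := le_antisymm hba (norm_nonneg b)
    simp [this]
  · have ht : ‖b / a‖ ≤ 1 := by
      rw [norm_div]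
      exact div_le_one_of_le₀ hba (norm_nonneg a)
    have hk := key (b / a) ht
    have hfact : a^2 + b^2 = a^2 * (1 + (b/a)^2) := by field_simp
    rw [hfact, norm_mul, norm_pow]
    nlinarith [norm_nonneg a, sq_nonneg ‖a‖]

noncomputable def re (z : Kd (-1)) : ℚ_[2] := (exists_coords z).choose
noncomputable def im (z : Kd (-1)) : ℚ_[2] := (exists_coords z).choose_spec.choose
lemma co_spec (z : Kd (-1)) : z = ι (re z) + ι (im z) * ρ :=
  (exists_coords z).choose_spec.choose_spec

noncomputable def φ (z : Kd (-1)) : ℝ := ‖re z ^ 2 + im z ^ 2‖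

lemma phi_eq {z : Kd (-1)} {a b : ℚ_[2]} (h : z = ι a + ι b * ρ) : φ z = ‖a^2 + b^2‖ := by
  obtain ⟨h1, h2⟩ := coords_inj ((co_spec z).symm.trans h)
  rw [φ, h1, h2]

lemma phi_zero : φ 0 = 0 := by
  rw [phi_eq (show (0 : Kd (-1)) = ι 0 + ι 0 * ρ by simp)]; simp

lemma phi_one : φ 1 = 1 := by
  rw [phi_eq (show (1 : Kd (-1)) = ι 1 + ι 0 * ρ by simp)]; simp

lemma phi_nonneg (z : Kd (-1)) : 0 ≤ φ z := norm_nonneg _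

lemma phi_mul (y z : Kd (-1)) : φ (y * z) = φ y * φ z := by
  have hm : y * z = ι (re y * re z - im y * im z) + ι (re y * im z + im y * re z) * ρ := by
    conv_lhs => rw [co_spec y, co_spec z]
    simp only [map_sub, map_add, map_mul]
    linear_combination (ι (im y) * ι (im z)) * rho_sq'
  rw [phi_eq hm, phi_eq (co_spec y), phi_eq (co_spec z), ← norm_mul]
  congr 1
  ring

lemma phi_pow (z : Kd (-1)) (n : ℕ) : φ (z ^ n) = φ z ^ n := by
  induction n with
  | zero => simpa using phi_one
  | succ n ih => rw [pow_succ, phi_mul, ih, ← pow_succ]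

lemma phi_neg (z : Kd (-1)) : φ (-z) = φ z := by
  have hm : -z = ι (-re z) + ι (-im z) * ρ := by
    conv_lhs => rw [co_spec z]
    simp only [map_neg]
    ring
  rw [phi_eq hm, φ]
  congr 1
  ring

lemma norm_two : ‖(2:ℚ_[2])‖ = 2⁻¹ := by
  rw [show (2:ℚ_[2]) = ((2:ℕ):ℚ_[2]) by norm_num, Padic.norm_p]
  norm_num

lemma phi_add_le (y z : Kd (-1)) : φ (y + z) ≤ max (φ y) (φ z) := by
  set a := re y; set b := im y; set c := re z; set d := im z
  have hm : y + z = ι (a + c) + ι (b + d) * ρ := by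
    conv_lhs => rw [co_spec y, co_spec z]
    simp only [map_add]; ring
  rw [phi_eq hm, phi_eq (co_spec y), phi_eq (co_spec z)]
  have hsplit : (a+c)^2 + (b+d)^2 = (a^2+b^2) + ((c^2+d^2) + 2*(a*c+b*d)) := by ring
  rw [hsplit]
  refine le_trans (Padic.nonarchimedean _ _) (max_le (le_max_left _ _) ?_)
  refine le_trans (Padic.nonarchimedean _ _) (max_le (le_max_right _ _) ?_)
  set m := max ‖a^2+b^2‖ ‖c^2+d^2‖ with hm'
  set Mx := max ‖a‖ ‖b‖; set My := max ‖c‖ ‖d‖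
  have h2n : ‖2*(a*c+b*d)‖ = 2⁻¹ * ‖a*c+b*d‖ := by rw [norm_mul, norm_two]
  have hac : ‖a*c+b*d‖ ≤ Mx * My := by
    refine le_trans (Padic.nonarchimedean _ _) (max_le ?_ ?_)
    · rw [norm_mul]
      exact mul_le_mul (le_max_left _ _) (le_max_left _ _) (norm_nonneg c)
        (le_trans (norm_nonneg a) (le_max_left _ _))
    · rw [norm_mul]
      exact mul_le_mul (le_max_right _ _) (le_max_right _ _) (norm_nonneg d)
        (le_trans (norm_nonneg b) (le_max_right _ _))
  have hKx := max_sq_le a b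
  have hKy := max_sq_le c d
  have hm1 : ‖a^2+b^2‖ ≤ m := le_max_left _ _
  have hm2 : ‖c^2+d^2‖ ≤ m := le_max_right _ _
  rw [h2n]
  nlinarith [sq_nonneg (Mx - My), norm_nonneg (a*c+b*d)]

lemma iota_inj : Function.Injective ι := by
  intro q1 q2 h
  have : ι q1 + ι 0 * ρ = ι q2 + ι 0 * ρ := by rw [h]
  exact (coords_inj this).1

noncomputable def conj : Kd (-1) →ₐ[ℚ_[2]] Kd (-1) :=
  AdjoinRoot.liftAlgHom _ (Algebra.ofId _ _) (-ρ) (by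
    simp only [eval₂_sub, eval₂_X_pow, eval₂_C, eval₂_neg, eval₂_one, map_neg, map_one]
    rw [neg_pow, rho_sq']
    ring)

lemma conj_rho : conj ρ = -ρ := by
  unfold conj ρ
  apply AdjoinRoot.liftAlgHom_root

lemma conj_iota (q : ℚ_[2]) : conj (ι q) = ι q := conj.commutes q

lemma algebraMap_eq_iota_comp :
    algebraMap ℤ_[2] (Kd (-1)) = ι.comp (algebraMap ℤ_[2] ℚ_[2]) := rfl

lemma conj_integral {z : Kd (-1)} (hz : IsIntegral ℤ_[2] z) : IsIntegral ℤ_[2] (conj z) := by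
  obtain ⟨P, Pm, hP⟩ := hz
  refine ⟨P, Pm, ?_⟩
  have h0 := congrArg (conj : Kd (-1) →ₐ[ℚ_[2]] Kd (-1)) hP
  rw [map_zero] at h0
  rw [show (conj (eval₂ (algebraMap ℤ_[2] (Kd (-1))) z P)) =
    eval₂ ((conj : Kd (-1) →ₐ[ℚ_[2]] Kd (-1)).toRingHom.comp (algebraMap ℤ_[2] (Kd (-1))))
      (conj z) P from hom_eval₂ _ _ _ _] at h0
  have e : algebraMap ℤ_[2] (Kd (-1)) =
      (conj : Kd (-1) →ₐ[ℚ_[2]] Kd (-1)).toRingHom.comp (algebraMap ℤ_[2] (Kd (-1))) := by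
    rw [algebraMap_eq_iota_comp, ← RingHom.comp_assoc]
    congr 1
    ext q
    exact (conj_iota q).symm
  rw [e]
  exact h0

lemma norm_integral {z : Kd (-1)} (hz : IsIntegral ℤ_[2] z) : ‖re z ^ 2 + im z ^ 2‖ ≤ 1 := by
  set a := re z with ha
  set b := im z with hb
  have h1 : z = ι a + ι b * ρ := co_spec z
  have hcz : conj z = ι a - ι b * ρ := by
    rw [h1, map_add, map_mul, conj_iota, conj_iota, conj_rho]
    ring
  have hprod : z * conj z = ι (a ^ 2 + b ^ 2) := by
    rw [hcz, h1]
    simp only [map_add, map_pow]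
    linear_combination (-(ι b * ι b)) * rho_sq'
  have hint : IsIntegral ℤ_[2] (ι (a ^ 2 + b ^ 2)) := by
    rw [← hprod]; exact hz.mul (conj_integral hz)
  obtain ⟨P, Pm, hP⟩ := hint
  have hev : ι (eval₂ (algebraMap ℤ_[2] ℚ_[2]) (a ^ 2 + b ^ 2) P) = 0 := by
    rw [hom_eval₂ P (algebraMap ℤ_[2] ℚ_[2]) ι _, ← algebraMap_eq_iota_comp]
    exact hP
  have hqint : IsIntegral ℤ_[2] (a ^ 2 + b ^ 2 : ℚ_[2]) :=
    ⟨P, Pm, by rw [← map_zero ι] at hev; exact iota_inj hev⟩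
  obtain ⟨y, hy⟩ := IsIntegrallyClosed.isIntegral_iff.mp hqint
  rw [← hy]
  exact y.norm_le_one

end SexticAux

namespace SexticAux

lemma phi_sum_le {B : ℝ} (hB : 0 ≤ B) (s : Finset (Fin 6)) (f : Fin 6 → Kd (-1))
    (h : ∀ i ∈ s, φ (f i) ≤ B) : φ (∑ i ∈ s, f i) ≤ B := by
  induction s using Finset.induction with
  | empty => simpa [phi_zero] using hB
  | insert _ _ hnot ih =>
    rename_i a s
    rw [Finset.sum_insert hnot]
    refine le_trans (phi_add_le _ _) (max_le (h a (Finset.mem_insert_self a s)) ?_)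
    exact ih fun i hi => h i (Finset.mem_insert_of_mem hi)

lemma phi_pi : φ (1 + ρ) = 2⁻¹ := by
  rw [phi_eq (show (1 + ρ : Kd (-1)) = ι 1 + ι 1 * ρ by simp)]
  norm_num [norm_two]

end SexticAux

/-- The form `x₀⁶ + π x₁⁶ + ⋯ + π⁵ x₅⁶` with `π = 1 + √-1` has only the trivial
zero over the ring of integers of `ℚ₂(√-1)`. -/
theorem stmt0 (x : Fin 6 → Kd (-1)) (hx : ∀ i, inO (x i))
    (h : ∑ i : Fin 6,
      (1 + AdjoinRoot.root (X ^ 2 - C (-1 : ℚ_[2]))) ^ (i : ℕ) * x i ^ 6 = 0) :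
    x = 0 := by
  classical
  open SexticAux in
  by_contra hx0
  have hS : ∃ i, x i ≠ 0 := by
    by_contra hall
    push_neg at hall
    exact hx0 (funext fun i => hall i)
  set c : Fin 6 → Kd (-1) := fun i => (1 + ρ) ^ (i : ℕ) * x i ^ 6 with hc
  have hsum0 : ∑ i : Fin 6, c i = 0 := h
  set N : Fin 6 → ℚ_[2] := fun i => re (x i) ^ 2 + im (x i) ^ 2 with hN
  have hNne : ∀ i, x i ≠ 0 → N i ≠ 0 := by
    intro i hxi hNi
    have hmax := max_sq_le (re (x i)) (im (x i))
    rw [show re (x i) ^ 2 + im (x i) ^ 2 = N i from rfl, hNi, norm_zero, mul_zero] at hmax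
    have h0 : max ‖re (x i)‖ ‖im (x i)‖ = 0 := by
      have h1 : (0:ℝ) ≤ max ‖re (x i)‖ ‖im (x i)‖ :=
        le_trans (norm_nonneg _) (le_max_left _ _)
      nlinarith
    have hre : re (x i) = 0 := norm_eq_zero.mp (le_antisymm
      (h0 ▸ le_max_left _ _) (norm_nonneg _))
    have him : im (x i) = 0 := norm_eq_zero.mp (le_antisymm
      (h0 ▸ le_max_right _ _) (norm_nonneg _))
    exact hxi (by rw [co_spec (x i), hre, him]; simp)
  set W : Fin 6 → ℤ := fun i => (i : ℤ) + 6 * (N i).valuation with hW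
  have hphiN : ∀ i, x i ≠ 0 → φ (x i) = (2:ℝ) ^ (-(N i).valuation) := by
    intro i hxi
    rw [show φ (x i) = ‖N i‖ from phi_eq (co_spec (x i))]
    exact_mod_cast Padic.norm_eq_zpow_neg_valuation (hNne i hxi)
  have hvpos : ∀ i, x i ≠ 0 → 0 ≤ (N i).valuation := by
    intro i hxi
    exact (Padic.norm_le_one_iff_val_nonneg (N i)).1 (norm_integral (hx i))
  have hphic : ∀ i, x i ≠ 0 → φ (c i) = (2:ℝ) ^ (-(W i)) := by
    intro i hxi
    rw [hc]
    simp only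
    rw [phi_mul, phi_pow, phi_pow, phi_pi, hphiN i hxi, hW]
    simp only
    rw [show ((2:ℝ)⁻¹) = (2:ℝ) ^ (-1 : ℤ) by norm_num, ← zpow_natCast (((2:ℝ))^(-1:ℤ)),
      ← zpow_mul, ← zpow_natCast (((2:ℝ))^(-(N i).valuation)), ← zpow_mul, ← zpow_add₀
      (by norm_num : (2:ℝ) ≠ 0)]
    congr 1
    push_cast
    ring
  set S : Finset (Fin 6) := Finset.univ.filter (fun i => x i ≠ 0) with hSdef
  have hSne : S.Nonempty := by
    obtain ⟨i, hi⟩ := hS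
    exact ⟨i, by simp [hSdef, hi]⟩
  obtain ⟨j, hjS, hjmin⟩ := S.exists_min_image W hSne
  have hxj : x j ≠ 0 := by simpa [hSdef] using hjS
  have hbound : ∀ i ∈ Finset.univ.erase j, φ (c i) ≤ (2:ℝ) ^ (-(W j) - 1) := by
    intro i hi
    have hij : i ≠ j := (Finset.mem_erase.1 hi).1
    by_cases hxi : x i = 0
    · rw [hc]
      simp only
      rw [hxi]
      rw [show ((0:Kd (-1)) ^ 6) = 0 by norm_num, mul_zero, phi_zero]
      positivity
    · have hiS : i ∈ S := by simp [hSdef, hxi]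
      rw [hphic i hxi]
      apply zpow_le_zpow_right₀ one_le_two
      have hWij : W i ≠ W j := by
        have h1 : (i : ℤ) + 6 * (N i).valuation ≠ (j : ℤ) + 6 * (N j).valuation := by
          have hi6 : (i : ℤ) < 6 := by exact_mod_cast i.2
          have hj6 : (j : ℤ) < 6 := by exact_mod_cast j.2
          have hi0 : (0:ℤ) ≤ (i : ℤ) := by positivity
          have hj0 : (0:ℤ) ≤ (j : ℤ) := by positivity
          have hne : (i : ℤ) ≠ (j : ℤ) := by
            intro hn
            exact hij (Fin.ext (by exact_mod_cast hn))
          omega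
        simpa [hW] using h1
      have := hjmin i hiS
      omega
  have hcj : c j = -∑ i ∈ Finset.univ.erase j, c i := by
    have := Finset.sum_erase_add Finset.univ c (Finset.mem_univ j)
    rw [hsum0] at this
    linear_combination this
  have hub : φ (c j) ≤ (2:ℝ) ^ (-(W j) - 1) := by
    rw [hcj, phi_neg]
    exact phi_sum_le (by positivity) _ _ hbound
  rw [hphic j hxj] at hub
  have : (2:ℝ) ^ (-(W j) - 1) < (2:ℝ) ^ (-(W j)) :=
    zpow_lt_zpow_right₀ one_lt_two (by omega)
  linarith
end

section
/- Let K ∈ {ℚ₂(√-1), ℚ₂(√-5)} with ring of integers 𝒪 and uniformizer π, and let v be the normalized valuation. Suppose u, w ∈ 𝒪 are units with u ≢ w (mod π²) (same level, different π-coefficients). Then for each choice ε ∈ {0,1} there exist α, β ∈ 𝒪, not both divisible by π, such that uα⁶ + wβ⁶ = π·t where t is a unit whose π-coefficient equals ε. -/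
open Polynomial Finset

noncomputable section Aux
open Polynomial
variable (d : ℚ_[2])

abbrev fd : ℚ_[2][X] := X ^ 2 - C d

lemma fd_monic : (fd d).Monic := by
  simpa [fd] using monic_X_pow_sub_C d (two_ne_zero)

lemma fd_deg : (fd d).degree = 2 := by
  exact_mod_cast degree_X_pow_sub_C (n := 2) (by norm_num) d

def rr : Kd d := AdjoinRoot.root (fd d)

lemma rr_sq : rr d ^ 2 = algebraMap ℚ_[2] (Kd d) d := by
  have h := AdjoinRoot.eval₂_root (fd d)
  simp [fd, AdjoinRoot.algebraMap_eq, rr] at h ⊢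
  linear_combination h

instance : Nontrivial (Kd d) := by
  constructor
  refine ⟨1, 0, fun h => ?_⟩
  have : AdjoinRoot.mk (fd d) 1 = AdjoinRoot.mk (fd d) 0 := by
    simpa [map_one, map_zero] using h
  rw [AdjoinRoot.mk_eq_mk] at this
  simp only [sub_zero] at this
  have hdeg := Polynomial.degree_le_of_dvd this one_ne_zero
  rw [fd_deg, Polynomial.degree_one] at hdeg
  norm_num at hdeg

lemma ofQ_inj : Function.Injective (algebraMap ℚ_[2] (Kd d)) :=
  (algebraMap ℚ_[2] (Kd d)).injective

lemma rep_all (x : Kd d) : ∃ a b : ℚ_[2],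
    x = algebraMap ℚ_[2] (Kd d) a + algebraMap ℚ_[2] (Kd d) b * rr d := by
  obtain ⟨g, rfl⟩ := AdjoinRoot.mk_surjective (g := fd d) x
  refine ⟨(g %ₘ fd d).coeff 0, (g %ₘ fd d).coeff 1, ?_⟩
  have h1 : AdjoinRoot.mk (fd d) g = AdjoinRoot.mk (fd d) (g %ₘ fd d) := by
    rw [AdjoinRoot.mk_eq_mk]
    exact ⟨g /ₘ fd d, by rw [Polynomial.modByMonic_eq_sub_mul_div g (fd d)]; ring⟩
  have hdeg : (g %ₘ fd d).degree ≤ 1 := by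
    have := Polynomial.degree_modByMonic_lt g (fd_monic d)
    rw [fd_deg] at this
    exact Order.le_of_lt_succ (by exact_mod_cast this)
  have h2 := Polynomial.eq_X_add_C_of_degree_le_one hdeg
  rw [h1, h2]
  simp [AdjoinRoot.algebraMap_eq, rr, map_add, map_mul]
  ring

-- chunk 2
def sg : Kd d →ₐ[ℚ_[2]] Kd d :=
  AdjoinRoot.liftAlgHom (fd d) (Algebra.ofId ℚ_[2] (Kd d)) (-(rr d)) (by
    show aeval (-(rr d)) (fd d) = 0
    rw [map_sub, map_pow, aeval_X, aeval_C, neg_sq, rr_sq, sub_self])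

lemma sg_rr : sg d (rr d) = -(rr d) :=
  AdjoinRoot.liftAlgHom_root _ _ _ _

lemma sg_ofQ (a : ℚ_[2]) : sg d (algebraMap ℚ_[2] (Kd d) a) = algebraMap ℚ_[2] (Kd d) a :=
  (sg d).commutes a

lemma ozq (z : ℤ_[2]) :
    algebraMap ℤ_[2] (Kd d) z = algebraMap ℚ_[2] (Kd d) (z : ℚ_[2]) := rfl

lemma inO_Z (z : ℤ_[2]) : inO (algebraMap ℤ_[2] (Kd d) z) := isIntegral_algebraMap

lemma inO_sg {x : Kd d} (hx : inO x) : inO (sg d x) := by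
  obtain ⟨P, hPm, hPe⟩ := hx
  refine ⟨P, hPm, ?_⟩
  have := Polynomial.hom_eval₂ P (algebraMap ℤ_[2] (Kd d)) (sg d : Kd d →+* Kd d) x
  rw [hPe, map_zero] at this
  have hcomp : ((sg d : Kd d →+* Kd d).comp (algebraMap ℤ_[2] (Kd d)))
      = algebraMap ℤ_[2] (Kd d) := by
    ext z
    exact sg_ofQ d (z : ℚ_[2])
  rw [hcomp] at this
  exact this.symm

lemma pullback {q : ℚ_[2]} (h : inO (algebraMap ℚ_[2] (Kd d) q)) :
    ∃ z : ℤ_[2], (z : ℚ_[2]) = q := by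
  obtain ⟨P, hPm, hPe⟩ := h
  have h2 : IsIntegral ℤ_[2] q := by
    refine ⟨P, hPm, ?_⟩
    have := Polynomial.hom_eval₂ P (algebraMap ℤ_[2] ℚ_[2]) (algebraMap ℚ_[2] (Kd d)) q
    have heq : (algebraMap ℚ_[2] (Kd d)).comp (algebraMap ℤ_[2] ℚ_[2])
        = algebraMap ℤ_[2] (Kd d) := rfl
    rw [heq] at this
    apply ofQ_inj d
    rw [this, hPe, map_zero]
  obtain ⟨z, hz⟩ := IsIntegrallyClosed.isIntegral_iff.mp h2
  exact ⟨z, hz⟩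

lemma tr_eq (a b : ℚ_[2]) :
    (algebraMap ℚ_[2] (Kd d) a + algebraMap ℚ_[2] (Kd d) b * rr d)
      + sg d (algebraMap ℚ_[2] (Kd d) a + algebraMap ℚ_[2] (Kd d) b * rr d)
    = algebraMap ℚ_[2] (Kd d) (2 * a) := by
  rw [map_add, map_mul, sg_ofQ, sg_ofQ, sg_rr, map_mul]
  have h2 : algebraMap ℚ_[2] (Kd d) 2 = 2 := map_ofNat _ 2
  rw [h2]
  ring

lemma nm_eq (a b : ℚ_[2]) :
    (algebraMap ℚ_[2] (Kd d) a + algebraMap ℚ_[2] (Kd d) b * rr d)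
      * sg d (algebraMap ℚ_[2] (Kd d) a + algebraMap ℚ_[2] (Kd d) b * rr d)
    = algebraMap ℚ_[2] (Kd d) (a ^ 2 - d * b ^ 2) := by
  rw [map_add, map_mul, sg_ofQ, sg_ofQ, sg_rr, map_sub, map_mul, map_pow, map_pow]
  have : rr d ^ 2 = algebraMap ℚ_[2] (Kd d) d := rr_sq d
  ring_nf
  rw [this]

-- chunk 3 : arithmetic in ℤ_[2]
lemma z2_even_or_odd (A : ℤ_[2]) : (2 : ℤ_[2]) ∣ A ∨ (2 : ℤ_[2]) ∣ A - 1 := by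
  have h := PadicInt.toZMod_spec A
  rw [PadicInt.maximalIdeal_eq_span_p, Ideal.mem_span_singleton] at h
  have ht : PadicInt.toZMod A = 0 ∨ PadicInt.toZMod A = 1 := by
    generalize PadicInt.toZMod A = t
    fin_cases t
    · exact Or.inl rfl
    · exact Or.inr rfl
  rcases ht with ht | ht <;> rw [ht] at h
  · left; simpa using h
  · right; simpa using (show ((1 : ZMod 2).cast : ℤ_[2]) = 1 from rfl) ▸ h

lemma z2_unit_of_odd {A : ℤ_[2]} (h : ¬ (2 : ℤ_[2]) ∣ A) : IsUnit A := by
  by_contra hA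
  exact h ((PadicInt.norm_lt_one_iff_dvd A).mp (PadicInt.not_isUnit_iff.mp hA))

lemma z2_two_not_unit : ¬ IsUnit (2 : ℤ_[2]) := by
  rw [PadicInt.not_isUnit_iff]
  have : ‖(2 : ℤ_[2])‖ = 2⁻¹ := by
    simpa using PadicInt.norm_p (p := 2)
  rw [this]; norm_num

lemma z2_not_two_dvd_one : ¬ (2 : ℤ_[2]) ∣ 1 := fun h => z2_two_not_unit (isUnit_of_dvd_one h)

lemma z2_norm_four : ‖(4 : ℤ_[2])‖ = 4⁻¹ := by
  have h2 : ‖(2 : ℤ_[2])‖ = 2⁻¹ := by simpa using PadicInt.norm_p (p := 2)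
  have : (4 : ℤ_[2]) = 2 * 2 := by norm_num
  rw [this, norm_mul, h2]; norm_num

lemma z2_four_dvd_unit {A : ℤ_[2]} (hA : IsUnit A) : ¬ (4 : ℤ_[2]) ∣ A := by
  rintro ⟨c, rfl⟩
  have := PadicInt.isUnit_iff.mp hA
  rw [norm_mul, z2_norm_four] at this
  have hc := PadicInt.norm_le_one c
  nlinarith [norm_nonneg c]

lemma z2_not_four_dvd_two : ¬ (4 : ℤ_[2]) ∣ 2 := by
  rintro ⟨c, hc⟩
  have h2 : ‖(2 : ℤ_[2])‖ = 2⁻¹ := by simpa using PadicInt.norm_p (p := 2)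
  have := congrArg (‖·‖) hc
  simp only [norm_mul, z2_norm_four, h2] at this
  have hc1 := PadicInt.norm_le_one c
  nlinarith [norm_nonneg c]

lemma z2_odd_sq {A : ℤ_[2]} (h : ¬ (2 : ℤ_[2]) ∣ A) : (4 : ℤ_[2]) ∣ A ^ 2 - 1 := by
  rcases z2_even_or_odd A with h' | h'
  · exact absurd h' h
  · obtain ⟨k, hk⟩ := h'
    refine ⟨k + k ^ 2, ?_⟩
    have : A = 1 + 2 * k := by linear_combination hk
    rw [this]; ring

lemma z2_even_sq {A : ℤ_[2]} (h : (2 : ℤ_[2]) ∣ A) : (4 : ℤ_[2]) ∣ A ^ 2 := by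
  obtain ⟨k, rfl⟩ := h
  exact ⟨k ^ 2, by ring⟩

-- chunk 4 : integral elements have integral coordinates
lemma repO (D : ℤ_[2]) (hD : (D : ℚ_[2]) = d) (hDu : IsUnit D) (hD4 : (4 : ℤ_[2]) ∣ D + 1)
    {x : Kd d} (hx : inO x) :
    ∃ A B : ℤ_[2], x = algebraMap ℤ_[2] (Kd d) A + algebraMap ℤ_[2] (Kd d) B * rr d := by
  obtain ⟨a, b, rfl⟩ := rep_all d x
  have htr : inO (algebraMap ℚ_[2] (Kd d) (2 * a)) := by
    rw [← tr_eq]; exact hx.add (inO_sg d hx)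
  have hnm : inO (algebraMap ℚ_[2] (Kd d) (a ^ 2 - d * b ^ 2)) := by
    rw [← nm_eq]; exact hx.mul (inO_sg d hx)
  obtain ⟨T, hT⟩ := pullback d htr
  obtain ⟨N, hN⟩ := pullback d hnm
  have hd1 : ‖d‖ = 1 := by
    rw [← hD, PadicInt.padic_norm_e_of_padicInt]
    exact PadicInt.isUnit_iff.mp hDu
  have hTle : ‖2 * a‖ ≤ 1 := by
    rw [← hT, PadicInt.padic_norm_e_of_padicInt]; exact PadicInt.norm_le_one T
  have hNle : ‖a ^ 2 - d * b ^ 2‖ ≤ 1 := by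
    rw [← hN, PadicInt.padic_norm_e_of_padicInt]; exact PadicInt.norm_le_one N
  have h4 : ‖(4 : ℚ_[2])‖ ≤ 1 := by
    have : ((4 : ℤ_[2]) : ℚ_[2]) = (4 : ℚ_[2]) := by norm_cast
    rw [← this, PadicInt.padic_norm_e_of_padicInt]; exact PadicInt.norm_le_one _
  have hkey : (2 * b) ^ 2 * d = (2 * a) ^ 2 + -(4 * (a ^ 2 - d * b ^ 2)) := by ring
  have hble : ‖2 * b‖ ≤ 1 := by
    have h1 : ‖(2 * b) ^ 2 * d‖ ≤ 1 := by
      rw [hkey]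
      refine le_trans (Padic.nonarchimedean _ _) (max_le ?_ ?_)
      · rw [norm_pow]; exact pow_le_one₀ (norm_nonneg _) hTle
      · rw [norm_neg, norm_mul]
        calc ‖(4:ℚ_[2])‖ * ‖a^2 - d*b^2‖ ≤ 1 * 1 :=
          mul_le_mul h4 hNle (norm_nonneg _) (by norm_num)
        _ = 1 := by norm_num
    rw [norm_mul, norm_pow, hd1, mul_one] at h1
    nlinarith [norm_nonneg (2 * b)]
  set A0 : ℤ_[2] := ⟨2 * a, hTle⟩ with hA0
  set B0 : ℤ_[2] := ⟨2 * b, hble⟩ with hB0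
  have hkey2 : A0 ^ 2 - D * B0 ^ 2 = 4 * N := by
    apply Subtype.ext
    push_cast
    rw [hN, hD]
    show (2 * a) ^ 2 - d * (2 * b) ^ 2 = 4 * (a ^ 2 - d * b ^ 2)
    ring
  have hev : (2 : ℤ_[2]) ∣ A0 ∧ (2 : ℤ_[2]) ∣ B0 := by
    by_cases eA : (2 : ℤ_[2]) ∣ A0 <;> by_cases eB : (2 : ℤ_[2]) ∣ B0
    · exact ⟨eA, eB⟩
    · -- A0 even, B0 odd
      exfalso
      have hDB : IsUnit (D * B0 ^ 2) := hDu.mul ((z2_unit_of_odd eB).pow 2)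
      have : (4 : ℤ_[2]) ∣ D * B0 ^ 2 := by
        have h1 : D * B0 ^ 2 = A0 ^ 2 - 4 * N := by linear_combination -hkey2
        rw [h1]
        exact dvd_sub (z2_even_sq eA) ⟨N, rfl⟩
      exact z2_four_dvd_unit hDB this
    · exfalso
      have h1 : (4 : ℤ_[2]) ∣ A0 ^ 2 := by
        have : A0 ^ 2 = D * B0 ^ 2 + 4 * N := by linear_combination hkey2
        rw [this]
        exact dvd_add (Dvd.dvd.mul_left (z2_even_sq eB) D) ⟨N, rfl⟩
      have h2 := z2_odd_sq eA
      have : (4 : ℤ_[2]) ∣ 1 := by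
        have : (1 : ℤ_[2]) = A0 ^ 2 - (A0 ^ 2 - 1) := by ring
        rw [this]; exact dvd_sub h1 h2
      exact z2_four_dvd_unit isUnit_one this
    · exfalso
      have hA2 := z2_odd_sq eA
      have hB2 := z2_odd_sq eB
      have : (4 : ℤ_[2]) ∣ 2 := by
        have h2 : (2 : ℤ_[2]) = (A0 ^ 2 - D * B0 ^ 2) - (A0 ^ 2 - 1) + D * (B0 ^ 2 - 1) + (D + 1) := by
          ring
        rw [h2, hkey2]
        exact dvd_add (dvd_add (dvd_sub ⟨N, rfl⟩ hA2) (Dvd.dvd.mul_left hB2 D)) hD4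
      exact z2_not_four_dvd_two this
  obtain ⟨⟨A, hA⟩, ⟨B, hB⟩⟩ := hev
  refine ⟨A, B, ?_⟩
  have ha : a = (A : ℚ_[2]) := by
    have h' : (2 * a : ℚ_[2]) = ((2 * A : ℤ_[2]) : ℚ_[2]) := by rw [← hA]
    push_cast at h'
    exact mul_left_cancel₀ two_ne_zero h'
  have hb : b = (B : ℚ_[2]) := by
    have h' : (2 * b : ℚ_[2]) = ((2 * B : ℤ_[2]) : ℚ_[2]) := by rw [← hB]
    push_cast at h'
    exact mul_left_cancel₀ two_ne_zero h'
  rw [ozq, ozq, ← ha, ← hb]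

-- chunk 5 : lemmas relative to the uniformizer
lemma oz_inj : Function.Injective (algebraMap ℤ_[2] (Kd d)) := by
  intro x y h
  rw [ozq, ozq] at h
  exact Subtype.coe_injective (ofQ_inj d h)

lemma two_eq_oz : (2 : Kd d) = algebraMap ℤ_[2] (Kd d) 2 := (map_ofNat _ 2).symm

lemma nodd_conv (D : ℤ_[2]) (hD4 : (4 : ℤ_[2]) ∣ D + 1) (E F : ℤ_[2])
    (h : (2 : ℤ_[2]) ∣ E - F) : (2 : ℤ_[2]) ∣ E ^ 2 - D * F ^ 2 := by
  have h2D : (2 : ℤ_[2]) ∣ 1 - D := by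
    obtain ⟨k, hk⟩ := hD4
    exact ⟨1 - 2 * k, by linear_combination -hk⟩
  have : E ^ 2 - D * F ^ 2 = (E - F) * (E + F) + (1 - D) * F ^ 2 := by ring
  rw [this]
  exact dvd_add (h.mul_right _) (h2D.mul_right _)

lemma nodd (D : ℤ_[2]) (hD4 : (4 : ℤ_[2]) ∣ D + 1) (E F : ℤ_[2])
    (h : (2 : ℤ_[2]) ∣ E ^ 2 - D * F ^ 2) : (2 : ℤ_[2]) ∣ E - F := by
  by_contra hEF
  have hsum : ¬ (2 : ℤ_[2]) ∣ E + F := by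
    intro hs
    obtain ⟨k, hk⟩ := hs
    exact hEF ⟨k - F, by linear_combination hk⟩
  have hU : IsUnit ((E - F) * (E + F)) := (z2_unit_of_odd hEF).mul (z2_unit_of_odd hsum)
  have h2D : (2 : ℤ_[2]) ∣ 1 - D := by
    obtain ⟨k, hk⟩ := hD4
    exact ⟨1 - 2 * k, by linear_combination -hk⟩
  have hdvd : (2 : ℤ_[2]) ∣ (E - F) * (E + F) := by
    have : (E - F) * (E + F) = (E ^ 2 - D * F ^ 2) - (1 - D) * F ^ 2 := by ring
    rw [this]
    exact dvd_sub h (h2D.mul_right _)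
  exact z2_not_two_dvd_one (hdvd.trans (isUnit_iff_dvd_one.mp hU))

lemma inO_rr (D : ℤ_[2]) (hD : (D : ℚ_[2]) = d) : inO (rr d) := by
  refine ⟨X ^ 2 - C D, (monic_X_pow_sub_C D two_ne_zero), ?_⟩
  rw [eval₂_sub, eval₂_X_pow, eval₂_C, ozq, hD, rr_sq, sub_self]

lemma nmZ (D : ℤ_[2]) (hD : (D : ℚ_[2]) = d) (A B : ℤ_[2]) :
    (algebraMap ℤ_[2] (Kd d) A + algebraMap ℤ_[2] (Kd d) B * rr d)
      * sg d (algebraMap ℤ_[2] (Kd d) A + algebraMap ℤ_[2] (Kd d) B * rr d)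
    = algebraMap ℤ_[2] (Kd d) (A ^ 2 - D * B ^ 2) := by
  rw [ozq, ozq, ozq, nm_eq]
  congr 1
  push_cast
  rw [hD]

lemma inOZ2 (D : ℤ_[2]) (hD : (D : ℚ_[2]) = d) (A B : ℤ_[2]) :
    inO (algebraMap ℤ_[2] (Kd d) A + algebraMap ℤ_[2] (Kd d) B * rr d) :=
  (inO_Z d A).add ((inO_Z d B).mul (inO_rr d D hD))

lemma unitO_of_odd (D : ℤ_[2]) (hD : (D : ℚ_[2]) = d) (A B : ℤ_[2])
    (hodd : ¬ (2 : ℤ_[2]) ∣ A ^ 2 - D * B ^ 2) :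
    isUnitO (algebraMap ℤ_[2] (Kd d) A + algebraMap ℤ_[2] (Kd d) B * rr d) := by
  set x := algebraMap ℤ_[2] (Kd d) A + algebraMap ℤ_[2] (Kd d) B * rr d with hx
  have hxO : inO x := inOZ2 d D hD A B
  obtain ⟨v, hv⟩ := IsUnit.exists_right_inv (z2_unit_of_odd hodd)
  refine ⟨hxO, sg d x * algebraMap ℤ_[2] (Kd d) v, (inO_sg d hxO).mul (inO_Z d v), ?_⟩
  rw [← mul_assoc, nmZ d D hD, ← map_mul, hv, map_one]

lemma norm_mulO (D : ℤ_[2]) (hD : (D : ℚ_[2]) = d) (hDu : IsUnit D)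
    (hD4 : (4 : ℤ_[2]) ∣ D + 1) {x : Kd d} (hx : inO x) :
    ∃ n : ℤ_[2], x * sg d x = algebraMap ℤ_[2] (Kd d) n := by
  obtain ⟨A, B, rfl⟩ := repO d D hD hDu hD4 hx
  exact ⟨A ^ 2 - D * B ^ 2, nmZ d D hD A B⟩

-- chunk 6 : uniformizer lemmas
lemma one_not_pidvd (π : Kd d) (hπ : IsUniformizerO π) (z : Kd d) (hz : inO z)
    (h : (1 : Kd d) = π * z) : False :=
  hπ.2.1 ⟨hπ.1, z, hz, h.symm⟩

lemma not_unitO_two (D : ℤ_[2]) (hD : (D : ℚ_[2]) = d) (hDu : IsUnit D)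
    (hD4 : (4 : ℤ_[2]) ∣ D + 1) : ¬ isUnitO (2 : Kd d) := by
  rintro ⟨-, z, hz, hz1⟩
  obtain ⟨n, hn⟩ := norm_mulO d D hD hDu hD4 hz
  have h4 : algebraMap ℤ_[2] (Kd d) (4 * n) = algebraMap ℤ_[2] (Kd d) 1 := by
    have hsg : (2 : Kd d) * sg d z = 1 := by
      have := congrArg (sg d) hz1
      rw [map_mul, map_one] at this
      rw [← this]
      congr 1
      rw [two_eq_oz, ozq, sg_ofQ, ← ozq]
    rw [map_mul, map_one, ← hn]
    have h4' : algebraMap ℤ_[2] (Kd d) 4 = 4 := map_ofNat _ 4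
    rw [h4']
    have : (4 : Kd d) * (z * sg d z) = (2 * z) * (2 * sg d z) := by ring
    rw [this, hz1, hsg, one_mul]
  have := oz_inj d h4
  exact z2_four_dvd_unit isUnit_one ⟨n, this.symm⟩

lemma one_add_rr_eq (D : ℤ_[2]) (hD : (D : ℚ_[2]) = d) :
    (1 + rr d) * sg d (1 + rr d) = algebraMap ℤ_[2] (Kd d) (1 - D) := by
  have h := nmZ d D hD 1 1
  simp only [map_one, one_mul, one_pow, mul_one] at h
  exact h

lemma not_unitO_pi0 (D : ℤ_[2]) (hD : (D : ℚ_[2]) = d) (hDu : IsUnit D)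
    (hD4 : (4 : ℤ_[2]) ∣ D + 1) : ¬ isUnitO (1 + rr d) := by
  rintro ⟨-, z, hz, hz1⟩
  obtain ⟨n, hn⟩ := norm_mulO d D hD hDu hD4 hz
  have hsg : sg d (1 + rr d) * sg d z = 1 := by
    rw [← map_mul, hz1, map_one]
  have key : algebraMap ℤ_[2] (Kd d) ((1 - D) * n) = algebraMap ℤ_[2] (Kd d) 1 := by
    rw [map_mul, ← one_add_rr_eq d D hD, ← hn, map_one]
    have : (1 + rr d) * sg d (1 + rr d) * (z * sg d z)
        = ((1 + rr d) * z) * (sg d (1 + rr d) * sg d z) := by ring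
    rw [this, hz1, hsg, one_mul]
  have h1 := oz_inj d key
  have h2D : (2 : ℤ_[2]) ∣ 1 - D := by
    obtain ⟨k, hk⟩ := hD4
    exact ⟨1 - 2 * k, by linear_combination -hk⟩
  exact z2_not_two_dvd_one (h1 ▸ h2D.mul_right n)

lemma pi0_div (D : ℤ_[2]) (hD : (D : ℚ_[2]) = d) (hDu : IsUnit D)
    (hD4 : (4 : ℤ_[2]) ∣ D + 1) (π : Kd d) (hπ : IsUniformizerO π) :
    ∃ y : Kd d, inO y ∧ 1 + rr d = π * y := by
  obtain ⟨y, hy, hy1⟩ := hπ.2.2 (1 + rr d) (isIntegral_one.add (inO_rr d D hD))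
    (not_unitO_pi0 d D hD hDu hD4)
  exact ⟨y, hy, by rw [hy1, pow_one]⟩

lemma two_div (D : ℤ_[2]) (hD : (D : ℚ_[2]) = d) (hDu : IsUnit D)
    (hD4 : (4 : ℤ_[2]) ∣ D + 1) (π : Kd d) (hπ : IsUniformizerO π) :
    ∃ y : Kd d, inO y ∧ (2 : Kd d) = π * y := by
  have h2O : inO (2 : Kd d) := by rw [two_eq_oz]; exact inO_Z d 2
  obtain ⟨y, hy, hy1⟩ := hπ.2.2 2 h2O (not_unitO_two d D hD hDu hD4)
  exact ⟨y, hy, by rw [hy1, pow_one]⟩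

lemma divpi (D : ℤ_[2]) (hD : (D : ℚ_[2]) = d) (hDu : IsUnit D)
    (hD4 : (4 : ℤ_[2]) ∣ D + 1) (π : Kd d) (hπ : IsUniformizerO π)
    (A B : ℤ_[2]) (h : (2 : ℤ_[2]) ∣ A - B) :
    ∃ y : Kd d, inO y ∧
      algebraMap ℤ_[2] (Kd d) A + algebraMap ℤ_[2] (Kd d) B * rr d = π * y := by
  obtain ⟨C, hC⟩ := h
  obtain ⟨y0, hy0, hy0e⟩ := pi0_div d D hD hDu hD4 π hπ
  obtain ⟨y2, hy2, hy2e⟩ := two_div d D hD hDu hD4 π hπ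
  refine ⟨y2 * algebraMap ℤ_[2] (Kd d) C + algebraMap ℤ_[2] (Kd d) B * y0,
    (hy2.mul (inO_Z d C)).add ((inO_Z d B).mul hy0), ?_⟩
  have hAC : algebraMap ℤ_[2] (Kd d) A
      = 2 * algebraMap ℤ_[2] (Kd d) C + algebraMap ℤ_[2] (Kd d) B := by
    rw [two_eq_oz, ← map_mul, ← map_add]
    congr 1
    linear_combination hC
  rw [hAC]
  linear_combination (algebraMap ℤ_[2] (Kd d) C) * hy2e + (algebraMap ℤ_[2] (Kd d) B) * hy0e

lemma F1 (D : ℤ_[2]) (hD : (D : ℚ_[2]) = d) (hDu : IsUnit D)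
    (hD4 : (4 : ℤ_[2]) ∣ D + 1) (π : Kd d) (hπ : IsUniformizerO π)
    (x : Kd d) (hx : inO x) :
    (∃ y : Kd d, inO y ∧ x = π * y) ∨ (∃ y : Kd d, inO y ∧ x - 1 = π * y) := by
  obtain ⟨A, B, rfl⟩ := repO d D hD hDu hD4 hx
  rcases z2_even_or_odd (A - B) with h | h
  · exact Or.inl (divpi d D hD hDu hD4 π hπ A B h)
  · right
    have hx1 : algebraMap ℤ_[2] (Kd d) A + algebraMap ℤ_[2] (Kd d) B * rr d - 1
        = algebraMap ℤ_[2] (Kd d) (A - 1) + algebraMap ℤ_[2] (Kd d) B * rr d := by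
      rw [map_sub, map_one]; ring
    rw [hx1]
    exact divpi d D hD hDu hD4 π hπ (A - 1) B (by
      have : A - 1 - B = A - B - 1 := by ring
      rw [this]; exact h)

lemma unitO_of_not_pidvd (D : ℤ_[2]) (hD : (D : ℚ_[2]) = d) (hDu : IsUnit D)
    (hD4 : (4 : ℤ_[2]) ∣ D + 1) (π : Kd d) (hπ : IsUniformizerO π)
    (x : Kd d) (hx : inO x) (h : ¬ ∃ y : Kd d, inO y ∧ x = π * y) : isUnitO x := by
  obtain ⟨A, B, rfl⟩ := repO d D hD hDu hD4 hx
  rcases z2_even_or_odd (A - B) with he | he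
  · exact absurd (divpi d D hD hDu hD4 π hπ A B he) h
  · refine unitO_of_odd d D hD A B (fun hc => ?_)
    have := nodd D hD4 A B hc
    rcases z2_even_or_odd (A - B) with h' | h'
    · exact absurd (divpi d D hD hDu hD4 π hπ A B h') h
    · obtain ⟨k1, hk1⟩ := this
      obtain ⟨k2, hk2⟩ := h'
      exact z2_not_two_dvd_one ⟨k1 - k2, by linear_combination hk1 - hk2⟩

-- chunk 7 : 2 = π² ι
lemma F2 (D : ℤ_[2]) (hD : (D : ℚ_[2]) = d) (hDu : IsUnit D)
    (hD4 : (4 : ℤ_[2]) ∣ D + 1) (π : Kd d) (hπ : IsUniformizerO π) :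
    ∃ ι : Kd d, inO ι ∧ (2 : Kd d) = π ^ 2 * ι := by
  obtain ⟨P, Q, hπrep⟩ := repO d D hD hDu hD4 hπ.1
  have hPQ : (2 : ℤ_[2]) ∣ P - Q := by
    by_contra h
    apply hπ.2.1
    rw [hπrep]
    exact unitO_of_odd d D hD P Q (fun hc => h (nodd D hD4 P Q hc))
  have hnπ : π * sg d π = algebraMap ℤ_[2] (Kd d) (P ^ 2 - D * Q ^ 2) := by
    rw [hπrep]; exact nmZ d D hD P Q
  obtain ⟨nπ', hnπ'⟩ := nodd_conv D hD4 P Q hPQ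
  obtain ⟨y0, hy0O, hy0⟩ := pi0_div d D hD hDu hD4 π hπ
  obtain ⟨E0, F0, hy0rep⟩ := repO d D hD hDu hD4 hy0O
  have hn0 : y0 * sg d y0 = algebraMap ℤ_[2] (Kd d) (E0 ^ 2 - D * F0 ^ 2) := by
    rw [hy0rep]; exact nmZ d D hD E0 F0
  have key0 : algebraMap ℤ_[2] (Kd d) (1 - D)
      = algebraMap ℤ_[2] (Kd d) ((P ^ 2 - D * Q ^ 2) * (E0 ^ 2 - D * F0 ^ 2)) := by
    rw [← one_add_rr_eq d D hD, hy0, map_mul, map_mul, ← hnπ, ← hn0]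
    ring
  have h1 : 1 - D = (P ^ 2 - D * Q ^ 2) * (E0 ^ 2 - D * F0 ^ 2) := oz_inj d key0
  obtain ⟨k, hk⟩ := id hD4
  have h3 : 1 - 2 * k = nπ' * (E0 ^ 2 - D * F0 ^ 2) := by
    apply mul_left_cancel₀ (two_ne_zero' ℤ_[2])
    linear_combination h1 + (E0 ^ 2 - D * F0 ^ 2) * hnπ' + hk
  have hnodd : ¬ (2 : ℤ_[2]) ∣ nπ' := by
    rintro ⟨j, hj⟩
    exact z2_not_two_dvd_one ⟨k + j * (E0 ^ 2 - D * F0 ^ 2),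
      by linear_combination h3 + (E0 ^ 2 - D * F0 ^ 2) * hj⟩
  obtain ⟨y2, hy2O, hy2⟩ := two_div d D hD hDu hD4 π hπ
  obtain ⟨A2, B2, hy2rep⟩ := repO d D hD hDu hD4 hy2O
  have hn2 : y2 * sg d y2 = algebraMap ℤ_[2] (Kd d) (A2 ^ 2 - D * B2 ^ 2) := by
    rw [hy2rep]; exact nmZ d D hD A2 B2
  have key2 : algebraMap ℤ_[2] (Kd d) (4 : ℤ_[2])
      = algebraMap ℤ_[2] (Kd d) ((P ^ 2 - D * Q ^ 2) * (A2 ^ 2 - D * B2 ^ 2)) := by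
    have hsg2 : sg d (2 : Kd d) = 2 := by
      rw [two_eq_oz, ozq, sg_ofQ, ← ozq]
    have l1 : (2 : Kd d) * sg d (2 : Kd d) = algebraMap ℤ_[2] (Kd d) 4 := by
      rw [hsg2, two_eq_oz, ← map_mul]
      norm_num
    have key2' : algebraMap ℤ_[2] (Kd d) (4 : ℤ_[2]) = (π * sg d π) * (y2 * sg d y2) := by
      rw [← l1, hy2, map_mul]; ring
    rw [key2', hnπ, hn2, ← map_mul]
  have h4 : (4 : ℤ_[2]) = (P ^ 2 - D * Q ^ 2) * (A2 ^ 2 - D * B2 ^ 2) := oz_inj d key2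
  have h6 : (2 : ℤ_[2]) = nπ' * (A2 ^ 2 - D * B2 ^ 2) := by
    apply mul_left_cancel₀ (two_ne_zero' ℤ_[2])
    linear_combination h4 + (A2 ^ 2 - D * B2 ^ 2) * hnπ'
  obtain ⟨v, hv⟩ := IsUnit.exists_right_inv (z2_unit_of_odd hnodd)
  have hdvd2 : (2 : ℤ_[2]) ∣ A2 ^ 2 - D * B2 ^ 2 :=
    ⟨v, by linear_combination (-v) * h6 + (-(A2 ^ 2 - D * B2 ^ 2)) * hv⟩
  obtain ⟨y3, hy3O, hy3⟩ := divpi d D hD hDu hD4 π hπ A2 B2 (nodd D hD4 A2 B2 hdvd2)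
  refine ⟨y3, hy3O, ?_⟩
  rw [hy2, hy2rep, hy3]
  ring

-- chunk 8 : numerals are integral
lemma inO_nat (n : ℕ) : inO ((n : Kd d)) := by
  rw [← map_natCast (algebraMap ℤ_[2] (Kd d)) n]
  exact inO_Z d _

end Aux

/-- d-contraction: two units with different `π`-coefficients contract to a variable one
level higher, with prescribed `π`-coefficient `ε`. -/
theorem stmt3 (d : ℚ_[2]) (hd : d = -1 ∨ d = -5) (π : Kd d) (hπ : IsUniformizerO π)
    (u w : Kd d) (hu : isUnitO u) (hw : isUnitO w) (huw : ¬ pdvd π 2 (u - w)) (ε : Fin 2) :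
    ∃ α β t : Kd d, inO α ∧ inO β ∧ ¬ (pdvd π 1 α ∧ pdvd π 1 β) ∧
      isUnitO t ∧ u * α ^ 6 + w * β ^ 6 = π * t ∧
      pdvd π 2 (t - (1 + ((ε : ℕ) : Kd d) * π)) := by
  obtain ⟨D, hD, hDu, hD4⟩ : ∃ D : ℤ_[2], ((D : ℚ_[2]) = d) ∧ IsUnit D ∧ (4 : ℤ_[2]) ∣ D + 1 := by
    rcases hd with rfl | rfl
    · exact ⟨-1, by norm_cast, isUnit_one.neg, by norm_num⟩
    · refine ⟨-5, by norm_cast, ?_, ⟨-1, by ring⟩⟩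
      apply z2_unit_of_odd
      rintro ⟨k, hk⟩
      exact z2_not_two_dvd_one ⟨k + 3, by linear_combination hk⟩
  -- notation shortcuts
  have hπO : inO π := hπ.1
  -- u and w are ≡ 1 mod π
  have getu : ∀ v : Kd d, isUnitO v → ∃ a : Kd d, inO a ∧ v = 1 + π * a := by
    intro v hv
    rcases F1 d D hD hDu hD4 π hπ v hv.1 with ⟨y, hy, hy1⟩ | ⟨y, hy, hy1⟩
    · exfalso
      obtain ⟨-, z, hz, hz1⟩ := hv
      exact one_not_pidvd d π hπ (y * z) (hy.mul hz) (by rw [← hz1, hy1]; ring)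
    · exact ⟨y, hy, by linear_combination hy1⟩
  obtain ⟨a, haO, hua⟩ := getu u hu
  obtain ⟨b, hbO, hwb⟩ := getu w hw
  have hc : u - w = π * (a - b) := by linear_combination hua - hwb
  have hcO : inO (a - b) := haO.sub hbO
  obtain ⟨s, hsO, hcs⟩ : ∃ s : Kd d, inO s ∧ a - b = 1 + π * s := by
    rcases F1 d D hD hDu hD4 π hπ (a - b) hcO with ⟨y, hy, hy1⟩ | ⟨y, hy, hy1⟩
    · exact absurd ⟨y, hy, by rw [hc, hy1]; ring⟩ huw
    · exact ⟨y, hy, by linear_combination hy1⟩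
  obtain ⟨ι, hιO, hι⟩ := F2 d D hD hDu hD4 π hπ
  set m : Kd d := s + ι * w with hm
  have hmO : inO m := hsO.add (hιO.mul hw.1)
  have ht0 : u + w = π * (1 + π * m) := by
    linear_combination hc + π * hcs + w * hι - π ^ 2 * hm
  have ht0O : inO (1 + π * m) := isIntegral_one.add (hπO.mul hmO)
  have hβdvd : ¬ (pdvd π 1 (1 : Kd d)) := by
    rintro ⟨y, hy, h1⟩
    rw [pow_one] at h1
    exact one_not_pidvd d π hπ y hy h1
  have hεlt := ε.isLt
  -- ρ and its integrality
  have hnum : ∀ n : ℕ, inO ((n : ℕ) : Kd d) := inO_nat d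
  have h3O : inO (3 : Kd d) := by simpa using hnum 3
  have h7O : inO (7 : Kd d) := by simpa using hnum 7
  have h20O : inO (20 : Kd d) := by simpa using hnum 20
  have h15O : inO (15 : Kd d) := by simpa using hnum 15
  have h6O : inO (6 : Kd d) := by simpa using hnum 6
  set ρ : Kd d := 3 * ι + 7 * ι * π + 20 + 15 * π + 6 * π ^ 2 + π ^ 3 with hρ
  have hρO : inO ρ := by
    refine ((((((h3O.mul hιO).add ((h7O.mul hιO).mul hπO)).add h20O).add
      (h15O.mul hπO)).add (h6O.mul (hπO.pow 2))).add (hπO.pow 3))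
  rcases F1 d D hD hDu hD4 π hπ m hmO with ⟨n, hnO, hmn⟩ | ⟨n, hnO, hmn⟩
  · -- m ≡ 0 : t₀ = 1 + π² n, coefficient δ = 0
    rcases (by omega : (ε:ℕ) = 0 ∨ (ε:ℕ) = 1) with hε | hε
    · -- ε = 0 : take α = β = 1
      refine ⟨1, 1, 1 + π * m, isIntegral_one, isIntegral_one, fun h => hβdvd h.1, ?_, ?_, ?_⟩
      · apply unitO_of_not_pidvd d D hD hDu hD4 π hπ _ ht0O
        rintro ⟨y, hy, hy1⟩
        exact one_not_pidvd d π hπ (y - m) (hy.sub hmO) (by linear_combination hy1)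
      · rw [one_pow, mul_one, mul_one]; exact ht0
      · refine ⟨n, hnO, ?_⟩
        rw [hε]
        push_cast
        linear_combination π * hmn
    · -- ε = 1 : take α = 1 + π
      refine ⟨1 + π, 1, 1 + π * m + u * (6 + 15 * π + 20 * π ^ 2 + 15 * π ^ 3 + 6 * π ^ 4 + π ^ 5),
        isIntegral_one.add hπO, isIntegral_one, fun h => hβdvd h.2, ?_, ?_, ?_⟩
      · have htO : inO (1 + π * m + u * (6 + 15 * π + 20 * π ^ 2 + 15 * π ^ 3 + 6 * π ^ 4 + π ^ 5)) :=
          ht0O.add (hu.1.mul (((((h6O.add (h15O.mul hπO)).add (h20O.mul (hπO.pow 2))).add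
            ((h15O.mul (hπO.pow 3)))).add (h6O.mul (hπO.pow 4))).add (hπO.pow 5)))
        apply unitO_of_not_pidvd d D hD hDu hD4 π hπ _ htO
        rintro ⟨y, hy, hy1⟩
        refine one_not_pidvd d π hπ (y - 1 - π * (n + ρ + a + a * π * ρ))
          ((hy.sub isIntegral_one).sub (hπO.mul (((hnO.add hρO).add haO).add ((haO.mul hπO).mul hρO)))) ?_
        have hkey : (1 + π * m + u * (6 + 15 * π + 20 * π ^ 2 + 15 * π ^ 3 + 6 * π ^ 4 + π ^ 5))
            - (1 + 1 * π) = π ^ 2 * (n + ρ + a + a * π * ρ) := by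
          rw [hρ]
          linear_combination π * hmn + (6 + 15 * π + 20 * π ^ 2 + 15 * π ^ 3 + 6 * π ^ 4 + π ^ 5) * hua
            + (1 + π * a) * (3 + 7 * π) * hι
        linear_combination hy1 - hkey
      · rw [one_pow, mul_one]
        linear_combination ht0
      · refine ⟨n + ρ + a + a * π * ρ, ((hnO.add hρO).add haO).add ((haO.mul hπO).mul hρO), ?_⟩
        rw [hε, hρ]
        push_cast
        linear_combination π * hmn + (6 + 15 * π + 20 * π ^ 2 + 15 * π ^ 3 + 6 * π ^ 4 + π ^ 5) * hua
          + (1 + π * a) * (3 + 7 * π) * hι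
  · -- m ≡ 1 : t₀ = 1 + π + π² n, coefficient δ = 1
    rcases (by omega : (ε:ℕ) = 0 ∨ (ε:ℕ) = 1) with hε | hε
    · -- ε = 0 : take α = 1 + π
      refine ⟨1 + π, 1, 1 + π * m + u * (6 + 15 * π + 20 * π ^ 2 + 15 * π ^ 3 + 6 * π ^ 4 + π ^ 5),
        isIntegral_one.add hπO, isIntegral_one, fun h => hβdvd h.2, ?_, ?_, ?_⟩
      · have htO : inO (1 + π * m + u * (6 + 15 * π + 20 * π ^ 2 + 15 * π ^ 3 + 6 * π ^ 4 + π ^ 5)) :=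
          ht0O.add (hu.1.mul (((((h6O.add (h15O.mul hπO)).add (h20O.mul (hπO.pow 2))).add
            ((h15O.mul (hπO.pow 3)))).add (h6O.mul (hπO.pow 4))).add (hπO.pow 5)))
        apply unitO_of_not_pidvd d D hD hDu hD4 π hπ _ htO
        rintro ⟨y, hy, hy1⟩
        refine one_not_pidvd d π hπ (y - π * (ι * π + n + ρ + a + a * π * ρ))
          (hy.sub (hπO.mul (((((hιO.mul hπO).add hnO).add hρO).add haO).add ((haO.mul hπO).mul hρO)))) ?_
        have hkey : (1 + π * m + u * (6 + 15 * π + 20 * π ^ 2 + 15 * π ^ 3 + 6 * π ^ 4 + π ^ 5))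
            - (1 + 0 * π) = π ^ 2 * (ι * π + n + ρ + a + a * π * ρ) := by
          rw [hρ]
          linear_combination π * hmn + (6 + 15 * π + 20 * π ^ 2 + 15 * π ^ 3 + 6 * π ^ 4 + π ^ 5) * hua
            + (1 + π * a) * (3 + 7 * π) * hι + π * hι
        linear_combination hy1 - hkey
      · rw [one_pow, mul_one]
        linear_combination ht0
      · refine ⟨ι * π + n + ρ + a + a * π * ρ,
          ((((hιO.mul hπO).add hnO).add hρO).add haO).add ((haO.mul hπO).mul hρO), ?_⟩
        rw [hε, hρ]
        push_cast
        linear_combination π * hmn + (6 + 15 * π + 20 * π ^ 2 + 15 * π ^ 3 + 6 * π ^ 4 + π ^ 5) * hua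
          + (1 + π * a) * (3 + 7 * π) * hι + π * hι
    · -- ε = 1 : take α = β = 1
      refine ⟨1, 1, 1 + π * m, isIntegral_one, isIntegral_one, fun h => hβdvd h.1, ?_, ?_, ?_⟩
      · apply unitO_of_not_pidvd d D hD hDu hD4 π hπ _ ht0O
        rintro ⟨y, hy, hy1⟩
        exact one_not_pidvd d π hπ (y - m) (hy.sub hmO) (by linear_combination hy1)
      · rw [one_pow, mul_one, mul_one]; exact ht0
      · refine ⟨n, hnO, ?_⟩
        rw [hε]
        push_cast
        linear_combination π * hmn
end

section
/- Let K ∈ {ℚ₂(√-1), ℚ₂(√-5)} with ring of integers 𝒪, uniformizer π, and normalized valuation v. Suppose u, w ∈ 𝒪 are units with u ≡ w (mod π²). Then there exist α, β ∈ 𝒪, not both divisible by π, such that v(uα⁶ + wβ⁶) ≥ 3. -/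
open Polynomial Finset

namespace Stmt4Aux

variable (d : ℚ_[2])
lemma hmonic : (X ^ 2 - C d).Monic := monic_X_pow_sub_C d (by norm_num)
noncomputable def th : Kd d := AdjoinRoot.root (X ^ 2 - C d)
noncomputable def jm : ℚ_[2] →+* Kd d := algebraMap ℚ_[2] (Kd d)

lemma th_sq : (th d) ^ 2 = jm d d := by
  have h := AdjoinRoot.eval₂_root (X ^ 2 - C d)
  simp only [eval₂_sub, eval₂_X_pow, eval₂_C] at h
  have : jm d = AdjoinRoot.of (X ^ 2 - C d) := AdjoinRoot.algebraMap_eq _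
  rw [this]
  exact sub_eq_zero.mp h

noncomputable def pb : PowerBasis ℚ_[2] (Kd d) := AdjoinRoot.powerBasis' (hmonic d)
lemma pb_dim : (pb d).dim = 2 := by
  simp [pb, AdjoinRoot.powerBasis'_dim, natDegree_X_pow_sub_C]

noncomputable def Bs : Module.Basis (Fin 2) ℚ_[2] (Kd d) :=
  (pb d).basis.reindex (finCongr (pb_dim d))

lemma Bs_apply (i : Fin 2) : Bs d i = th d ^ (i : ℕ) := by
  rw [Bs, Module.Basis.reindex_apply, PowerBasis.coe_basis]
  congr 1

noncomputable def co (i : Fin 2) (x : Kd d) : ℚ_[2] := (Bs d).repr x i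

lemma rep_eq (x : Kd d) : x = jm d (co d 0 x) + jm d (co d 1 x) * th d := by
  have h := (Bs d).sum_repr x
  rw [Fin.sum_univ_two, Bs_apply, Bs_apply] at h
  simp only [Fin.val_zero, Fin.val_one, pow_zero, pow_one, Algebra.smul_def, mul_one] at h
  exact h.symm

lemma co_rep (a b : ℚ_[2]) :
    co d 0 (jm d a + jm d b * th d) = a ∧ co d 1 (jm d a + jm d b * th d) = b := by
  have hx : jm d a + jm d b * th d = a • Bs d 0 + b • Bs d 1 := by
    rw [Bs_apply, Bs_apply]
    simp [Algebra.smul_def, jm]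
  constructor <;>
  · rw [co, hx, map_add, map_smul, map_smul, Module.Basis.repr_self, Module.Basis.repr_self]
    simp

lemma rep_unique {a b a' b' : ℚ_[2]} (h : jm d a + jm d b * th d = jm d a' + jm d b' * th d) :
    a = a' ∧ b = b' := by
  have h1 := (co_rep d a b).1
  have h2 := (co_rep d a b).2
  rw [h, (co_rep d a' b').1] at h1
  rw [h, (co_rep d a' b').2] at h2
  exact ⟨h1.symm, h2.symm⟩


instance instTowerKd (d : ℚ_[2]) :
    @IsScalarTower ℤ_[2] ℚ_[2] (Kd d) Algebra.toSMul Algebra.toSMul Algebra.toSMul :=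
  @IsScalarTower.of_algebraMap_eq ℤ_[2] ℚ_[2] (Kd d) _ _ _ _ _ _ (fun _ => rfl)

instance instNontrivialKd (d : ℚ_[2]) : Nontrivial (Kd d) :=
  ⟨1, 0, fun h => by
    have h' : jm d 1 + jm d 0 * th d = jm d 0 + jm d 0 * th d := by
      simpa [jm] using h
    exact one_ne_zero (rep_unique d h').1⟩

lemma jm_inj : Function.Injective (jm d) := by
  intro a a' h
  have : jm d a + jm d 0 * th d = jm d a' + jm d 0 * th d := by rw [h]
  exact (rep_unique d this).1

noncomputable def conj : Kd d →ₐ[ℚ_[2]] Kd d :=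
  AdjoinRoot.liftAlgHom (X ^ 2 - C d) (Algebra.ofId ℚ_[2] (Kd d)) (-(th d)) (by
    change aeval (-(th d)) (X ^ 2 - C d) = 0
    simp only [map_sub, map_pow, aeval_X, aeval_C]
    rw [neg_pow, th_sq]
    simp [jm])

lemma conj_th : conj d (th d) = -(th d) := AdjoinRoot.liftAlgHom_root _ _ _ _

lemma conj_jm (a : ℚ_[2]) : conj d (jm d a) = jm d a := (conj d).commutes a

lemma conj_rep (a b : ℚ_[2]) :
    conj d (jm d a + jm d b * th d) = jm d a - jm d b * th d := by
  rw [map_add, map_mul, conj_th, conj_jm, conj_jm]; ring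

lemma mulconj (a b : ℚ_[2]) :
    (jm d a + jm d b * th d) * (jm d a - jm d b * th d) = jm d (a ^ 2 - d * b ^ 2) := by
  rw [map_sub, map_mul, map_pow, map_pow]
  linear_combination (-(jm d b ^ 2)) * th_sq d

noncomputable def Nm (x : Kd d) : ℚ_[2] := (co d 0 x) ^ 2 - d * (co d 1 x) ^ 2

lemma mul_conj (x : Kd d) : x * conj d x = jm d (Nm d x) := by
  conv_lhs => rw [rep_eq d x]
  rw [conj_rep, mulconj]
  rfl

lemma Nm_mul (x y : Kd d) : Nm d (x * y) = Nm d x * Nm d y := by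
  apply jm_inj d
  rw [map_mul, ← mul_conj, ← mul_conj, ← mul_conj, map_mul]
  ring

lemma Nm_one : Nm d 1 = 1 := by
  have h1 : (1 : Kd d) = jm d 1 + jm d 0 * th d := by simp
  rw [Nm]
  conv_lhs => rw [h1]
  rw [(co_rep d 1 0).1, (co_rep d 1 0).2]
  ring

-- integrality
lemma jm_int_iff (q : ℚ_[2]) : IsIntegral ℤ_[2] (jm d q) ↔ ‖q‖ ≤ 1 := by
  rw [show jm d q = algebraMap ℚ_[2] (Kd d) q from rfl,
    isIntegral_algebraMap_iff ((algebraMap ℚ_[2] (Kd d)).injective),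
    IsIntegrallyClosed.isIntegral_iff]
  constructor
  · rintro ⟨y, rfl⟩
    exact y.2
  · intro h
    exact ⟨⟨q, h⟩, rfl⟩

lemma conj_int {x : Kd d} (hx : IsIntegral ℤ_[2] x) : IsIntegral ℤ_[2] (conj d x) :=
  IsIntegral.map (conj d) hx

-- padic facts
lemma dvd_iff_toZModPow (n : ℕ) (A : ℤ_[2]) :
    (2:ℤ_[2]) ^ n ∣ A ↔ PadicInt.toZModPow n A = 0 := by
  rw [← RingHom.mem_ker, PadicInt.ker_toZModPow, Ideal.mem_span_singleton]
  norm_num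

lemma cast_toZModPow' (A : ℤ_[2]) :
    ZMod.castHom (by norm_num : (2:ℕ)^1 ∣ 2^3) (ZMod (2^1)) (PadicInt.toZModPow 3 A)
      = PadicInt.toZModPow 1 A := by
  rw [← PadicInt.zmod_cast_comp_toZModPow 1 3 (by norm_num)]
  rfl

lemma zmod8_key (D a b m : ZMod (2^3)) (hD : D = -1 ∨ D = -5)
    (h : a^2 - D*b^2 = 4*m) :
    ZMod.castHom (by norm_num : (2:ℕ)^1 ∣ 2^3) (ZMod (2^1)) a = 0 ∧
    ZMod.castHom (by norm_num : (2:ℕ)^1 ∣ 2^3) (ZMod (2^1)) b = 0 := by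
  revert h hD; revert D a b m; decide

lemma two_dvd_of_sq (A B M D : ℤ_[2]) (hD : D = -1 ∨ D = -5)
    (h : A^2 - D*B^2 = 4*M) : 2 ∣ A ∧ 2 ∣ B := by
  have h8 : (PadicInt.toZModPow 3 A)^2 - (PadicInt.toZModPow 3 D) * (PadicInt.toZModPow 3 B)^2
      = 4 * PadicInt.toZModPow 3 M := by
    have := congrArg (PadicInt.toZModPow 3) h
    push_cast [map_sub, map_mul, map_pow, map_ofNat] at this
    convert this using 2
  have hD8 : (PadicInt.toZModPow 3 D : ZMod (2^3)) = -1 ∨ (PadicInt.toZModPow 3 D : ZMod (2^3)) = -5 := by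
    rcases hD with h|h <;> [left; right] <;> rw [h] <;> simp [map_neg] <;>
      exact map_ofNat _ 5
  have key := zmod8_key _ _ _ _ hD8 h8
  have hA := key.1
  have hB := key.2
  rw [cast_toZModPow'] at hA hB
  have hA' := (dvd_iff_toZModPow 1 A).2 hA
  have hB' := (dvd_iff_toZModPow 1 B).2 hB
  exact ⟨by simpa using hA', by simpa using hB'⟩

lemma odd_unit {X : ℤ_[2]} (h : ¬ (2:ℤ_[2]) ∣ X) : IsUnit X := by
  rw [PadicInt.isUnit_iff]
  rcases lt_or_eq_of_le (PadicInt.norm_le_one X) with h'|h'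
  · exact absurd ((PadicInt.norm_lt_one_iff_dvd X).1 h') (by exact_mod_cast h)
  · exact h'

lemma unit_odd {X : ℤ_[2]} (h : IsUnit X) : ¬ (2:ℤ_[2]) ∣ X := by
  intro hdvd
  have := (PadicInt.norm_lt_one_iff_dvd X).2 (by exact_mod_cast hdvd)
  rw [PadicInt.isUnit_iff.1 h] at this
  exact lt_irrefl 1 this

lemma unit_sub_one_even {X : ℤ_[2]} (h : IsUnit X) : (2:ℤ_[2]) ∣ X - 1 := by
  have h1 : PadicInt.toZModPow 1 X ≠ 0 := by
    intro h0
    exact unit_odd h (by simpa using (dvd_iff_toZModPow 1 X).2 h0)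
  have h2 : PadicInt.toZModPow 1 X = 1 := by
    revert h1; generalize PadicInt.toZModPow 1 X = t; revert t; decide
  have : PadicInt.toZModPow 1 (X - 1) = 0 := by rw [map_sub, h2, map_one, sub_self]
  simpa using (dvd_iff_toZModPow 1 (X - 1)).2 this

lemma odd_sub_odd {X Y : ℤ_[2]} (hX : IsUnit X) (hY : IsUnit Y) : (2:ℤ_[2]) ∣ X - Y := by
  have h1 := unit_sub_one_even hX
  have h2 := unit_sub_one_even hY
  have : X - Y = (X - 1) - (Y - 1) := by ring
  rw [this]
  exact dvd_sub h1 h2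

lemma Dlift (hd : d = -1 ∨ d = -5) :
    ∃ D : ℤ_[2], (D : ℚ_[2]) = d ∧ (D = -1 ∨ D = -5) := by
  rcases hd with h|h
  · exact ⟨-1, by rw [h]; push_cast; ring, Or.inl rfl⟩
  · exact ⟨-5, by rw [h]; rfl, Or.inr rfl⟩

lemma norm_d (hd : d = -1 ∨ d = -5) : ‖d‖ = 1 := by
  obtain ⟨D, hD, hD'⟩ := Dlift d hd
  rw [← hD, show ‖(D:ℚ_[2])‖ = ‖D‖ from rfl, PadicInt.isUnit_iff.1 ?_]
  apply odd_unit
  rcases hD' with h|h <;> rw [h] <;> intro hdvd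
  · have := (dvd_iff_toZModPow 1 _).1 (by simpa using hdvd)
    simp at this
  · have := (dvd_iff_toZModPow 1 _).1 (by simpa using hdvd)
    rw [map_ofNat] at this
    revert this; decide

lemma coords_int (hd : d = -1 ∨ d = -5) {x : Kd d} (hx : IsIntegral ℤ_[2] x) :
    ∃ A B : ℤ_[2], x = jm d (A : ℚ_[2]) + jm d (B : ℚ_[2]) * th d := by
  obtain ⟨D, hDd, hD⟩ := Dlift d hd
  set a := co d 0 x with ha
  set b := co d 1 x with hb
  have hrep := rep_eq d x
  rw [← ha, ← hb] at hrep
  have hconj : conj d x = jm d a - jm d b * th d := by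
    conv_lhs => rw [hrep]
    exact conj_rep d a b
  -- trace
  have htr : x + conj d x = jm d (2*a) := by
    rw [hconj]; conv_lhs => rw [hrep]
    rw [map_mul]; push_cast [map_ofNat]; ring
  have h2a : ‖2*a‖ ≤ 1 := by
    rw [← jm_int_iff d, ← htr]
    exact hx.add (conj_int d hx)
  -- "b-trace"
  have hsq : (x - conj d x)^2 = jm d (4*d*b^2) := by
    rw [hconj]; conv_lhs => rw [hrep]
    rw [map_mul, map_mul, map_pow, map_ofNat]
    linear_combination (4 * jm d b ^2) * th_sq d
  have h2b : ‖4*d*b^2‖ ≤ 1 := by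
    rw [← jm_int_iff d, ← hsq]
    exact (hx.sub (conj_int d hx)).pow 2
  have h2b' : ‖2*b‖ ≤ 1 := by
    have h4 : ‖(2*b)^2‖ ≤ 1 := by
      have hd0 : d ≠ 0 := by
        intro h0
        have hnd := norm_d d hd
        rw [h0, norm_zero] at hnd
        norm_num at hnd
      have : (2*b)^2 = (4*d*b^2) * d⁻¹ := by
        field_simp
        ring
      rw [this, norm_mul, norm_inv, norm_d d hd]
      simpa using h2b
    rw [norm_pow] at h4
    nlinarith [norm_nonneg (2*b)]
  -- norm
  have hnm : x * conj d x = jm d (a^2 - d*b^2) := by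
    rw [hconj]
    conv_lhs => rw [hrep]
    exact mulconj d a b
  have hM : ‖a^2 - d*b^2‖ ≤ 1 := by
    rw [← jm_int_iff d, ← hnm]
    exact hx.mul (conj_int d hx)
  -- lift to ℤ₂
  set A : ℤ_[2] := ⟨2*a, h2a⟩
  set B : ℤ_[2] := ⟨2*b, h2b'⟩
  set M : ℤ_[2] := ⟨a^2 - d*b^2, hM⟩
  have heq : A^2 - D*B^2 = 4*M := by
    apply Subtype.ext
    show (2*a)^2 - (D:ℚ_[2])*(2*b)^2 = 4 * (a^2 - d*b^2)
    rw [hDd]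
    ring
  obtain ⟨hA2, hB2⟩ := two_dvd_of_sq A B M D hD heq
  obtain ⟨A0, hA0⟩ := hA2
  obtain ⟨B0, hB0⟩ := hB2
  have haA : a = (A0 : ℚ_[2]) := by
    have h := congrArg (fun t : ℤ_[2] => (t : ℚ_[2])) hA0
    push_cast [A] at h
    have h' : (2:ℚ_[2]) * a = 2 * (A0:ℚ_[2]) := by exact_mod_cast h
    exact mul_left_cancel₀ two_ne_zero h'
  have hbB : b = (B0 : ℚ_[2]) := by
    have h := congrArg (fun t : ℤ_[2] => (t : ℚ_[2])) hB0
    push_cast [B] at h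
    have h' : (2:ℚ_[2]) * b = 2 * (B0:ℚ_[2]) := by exact_mod_cast h
    exact mul_left_cancel₀ two_ne_zero h'
  refine ⟨A0, B0, ?_⟩
  rw [hrep, haA, hbB]

section Olemmas

lemma norm_nat_odd (n : ℕ) (hn : n % 2 = 1) : ‖(n:ℚ_[2])‖ = 1 := by
  have h1 : ¬ (2:ℤ_[2]) ∣ (n:ℤ_[2]) := by
    intro h
    have h0 := (dvd_iff_toZModPow 1 (n:ℤ_[2])).1 (by simpa using h)
    rw [map_natCast] at h0
    have := (ZMod.natCast_eq_zero_iff n (2^1)).1 h0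
    omega
  have h2 : ‖(n:ℤ_[2])‖ = 1 := PadicInt.isUnit_iff.1 (odd_unit h1)
  rw [show ((n:ℚ_[2])) = (((n:ℤ_[2])):ℚ_[2]) by push_cast; ring]
  exact h2

lemma jm_unitO (q : ℚ_[2]) (hq : ‖q‖ = 1) :
    IsIntegral ℤ_[2] (jm d q) ∧ ∃ y : Kd d, IsIntegral ℤ_[2] y ∧ jm d q * y = 1 := by
  have hq0 : q ≠ 0 := by intro h; rw [h, norm_zero] at hq; norm_num at hq
  refine ⟨(jm_int_iff d q).2 hq.le, jm d q⁻¹, (jm_int_iff d q⁻¹).2 (by rw [norm_inv, hq]; norm_num), ?_⟩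
  rw [← map_mul, mul_inv_cancel₀ hq0, map_one]

lemma th_int (hd : d = -1 ∨ d = -5) : IsIntegral ℤ_[2] (th d) := by
  obtain ⟨D, hDd, -⟩ := Dlift d hd
  refine ⟨Polynomial.X^2 - Polynomial.C D, monic_X_pow_sub_C D (by norm_num), ?_⟩
  simp only [Polynomial.eval₂_sub, Polynomial.eval₂_X_pow, Polynomial.eval₂_C]
  rw [th_sq d, show algebraMap ℤ_[2] (Kd d) D = jm d (D:ℚ_[2]) from rfl, hDd, sub_self]

-- norms of elements of O
lemma Nm_int {x : Kd d} (hx : IsIntegral ℤ_[2] x) : ‖Nm d x‖ ≤ 1 := by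
  rw [← jm_int_iff d, ← mul_conj]
  exact hx.mul (conj_int d hx)

lemma Nm_coords (A B : ℤ_[2]) (D : ℤ_[2]) (hDd : (D:ℚ_[2]) = d) :
    Nm d (jm d (A:ℚ_[2]) + jm d (B:ℚ_[2]) * th d) = ((A^2 - D*B^2 : ℤ_[2]) : ℚ_[2]) := by
  rw [Nm, (co_rep d _ _).1, (co_rep d _ _).2, ← hDd]
  push_cast
  ring

lemma unitO_norm {x : Kd d} (hx : IsIntegral ℤ_[2] x)
    (hu : ∃ y : Kd d, IsIntegral ℤ_[2] y ∧ x * y = 1) : ‖Nm d x‖ = 1 := by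
  obtain ⟨y, hy, hxy⟩ := hu
  have h1 : Nm d x * Nm d y = 1 := by
    rw [← Nm_mul, hxy, Nm_one]
  have h2 : ‖Nm d x‖ * ‖Nm d y‖ = 1 := by rw [← norm_mul, h1, norm_one]
  have h3 := Nm_int d hx
  have h4 := Nm_int d hy
  nlinarith [norm_nonneg (Nm d x), norm_nonneg (Nm d y)]

lemma norm_unitO {x : Kd d} (hx : IsIntegral ℤ_[2] x) (hn : ‖Nm d x‖ = 1) :
    ∃ y : Kd d, IsIntegral ℤ_[2] y ∧ x * y = 1 := by
  have hq0 : Nm d x ≠ 0 := by intro h; rw [h, norm_zero] at hn; norm_num at hn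
  refine ⟨conj d x * jm d (Nm d x)⁻¹, (conj_int d hx).mul ((jm_int_iff d _).2 (by rw [norm_inv, hn]; norm_num)), ?_⟩
  rw [← mul_assoc, mul_conj, ← map_mul, mul_inv_cancel₀ hq0, map_one]

end Olemmas

lemma Nm_sub_one_small (hd : d = -1 ∨ d = -5) {x : Kd d} (hx : IsIntegral ℤ_[2] x)
    (hn : ‖Nm d x‖ = 1) : ‖Nm d (x - 1)‖ < 1 := by
  obtain ⟨D, hDd, hD⟩ := Dlift d hd
  obtain ⟨A, B, hAB⟩ := coords_int d hd hx
  have hx1 : x - 1 = jm d ((A - 1 : ℤ_[2]) : ℚ_[2]) + jm d (B : ℚ_[2]) * th d := by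
    rw [hAB]; push_cast [map_sub, map_one]; ring
  have hNX : Nm d x = ((A^2 - D*B^2 : ℤ_[2]) : ℚ_[2]) := by
    rw [hAB]; exact Nm_coords d A B D hDd
  have hNY : Nm d (x - 1) = (((A-1)^2 - D*B^2 : ℤ_[2]) : ℚ_[2]) := by
    rw [hx1]; exact Nm_coords d (A-1) B D hDd
  have hNXu : IsUnit (A^2 - D*B^2) := by
    apply odd_unit
    intro h
    have := (PadicInt.norm_lt_one_iff_dvd _).2 (by exact_mod_cast h)
    rw [show ‖(A^2 - D*B^2 : ℤ_[2])‖ = ‖Nm d x‖ by rw [hNX]; rfl, hn] at this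
    exact lt_irrefl 1 this
  have hdvd : (2:ℤ_[2]) ∣ ((A-1)^2 - D*B^2) := by
    have h1 := unit_sub_one_even hNXu
    have : (A-1)^2 - D*B^2 = (A^2 - D*B^2 - 1) - 2*(A - 1) := by ring
    rw [this]
    exact dvd_sub h1 ⟨A - 1, rfl⟩
  rw [hNY, show ‖(((A-1)^2 - D*B^2 : ℤ_[2]) : ℚ_[2])‖ = ‖((A-1)^2 - D*B^2 : ℤ_[2])‖ from rfl]
  exact (PadicInt.norm_lt_one_iff_dvd _).2 (by exact_mod_cast hdvd)

lemma norm_two_q : ‖(2:ℚ_[2])‖ = 2⁻¹ := by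
  have := @Padic.norm_p 2 ⟨Nat.prime_two⟩
  simpa using this

lemma norm_one_sub_d (hd : d = -1 ∨ d = -5) : ‖1 - d‖ = 2⁻¹ := by
  rcases hd with h|h <;> rw [h]
  · norm_num [norm_two_q]
  · have h6 : (1 - (-5) : ℚ_[2]) = 2 * 3 := by norm_num
    rw [h6, norm_mul, norm_two_q, show ((3:ℚ_[2])) = ((3:ℕ):ℚ_[2]) by norm_num,
      norm_nat_odd 3 rfl]
    norm_num

noncomputable def pi0 : Kd d := 1 + th d

lemma pi0_int (hd : d = -1 ∨ d = -5) : IsIntegral ℤ_[2] (pi0 d) :=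
  isIntegral_one.add (th_int d hd)

lemma Nm_pi0 : Nm d (pi0 d) = 1 - d := by
  have h : pi0 d = jm d 1 + jm d 1 * th d := by rw [pi0]; simp [jm]
  rw [Nm, h, (co_rep d 1 1).1, (co_rep d 1 1).2]
  ring

lemma pi0_nonunit (hd : d = -1 ∨ d = -5) :
    ¬ ∃ y : Kd d, IsIntegral ℤ_[2] y ∧ pi0 d * y = 1 := by
  intro hu
  have := unitO_norm d (pi0_int d hd) hu
  rw [Nm_pi0, norm_one_sub_d d hd] at this
  norm_num at this

-- 2 = pi0^2 * e0 with e0 a "unit of O"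
lemma exists_e0 (hd : d = -1 ∨ d = -5) :
    ∃ e0 : Kd d, IsIntegral ℤ_[2] e0 ∧ (∃ y, IsIntegral ℤ_[2] y ∧ e0 * y = 1) ∧
      (2 : Kd d) = pi0 d ^ 2 * e0 := by
  rcases hd with h|h
  · -- d = -1, e0 = -θ, inverse θ
    have h2 : th d ^ 2 = -1 := by rw [th_sq, h]; simp [jm]
    refine ⟨-(th d), (th_int d (Or.inl h)).neg, ⟨th d, th_int d (Or.inl h), by
      linear_combination -h2⟩, ?_⟩
    rw [pi0]
    linear_combination (th d + 2) * h2
  · -- d = -5, e0 = jm (-(9⁻¹)) * (θ + 2), inverse θ - 2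
    have h2 : th d ^ 2 = -5 := by
      rw [th_sq, h, map_neg, map_ofNat]
    set q : Kd d := jm d (-(9:ℚ_[2])⁻¹) with hq
    have hq9 : q * (-9) = 1 := by
      rw [hq, show ((-9:Kd d)) = jm d (-9) by rw [map_neg, map_ofNat], ← map_mul]
      norm_num
    have hqint : IsIntegral ℤ_[2] q := (jm_int_iff d _).2 (by
      rw [norm_neg, norm_inv, show ((9:ℚ_[2])) = ((9:ℕ):ℚ_[2]) by norm_num, norm_nat_odd 9 rfl]
      norm_num)
    have h2int : IsIntegral ℤ_[2] ((2:Kd d)) := by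
      rw [show ((2:Kd d)) = jm d 2 from (map_ofNat (jm d) 2).symm]
      exact (jm_int_iff d 2).2 (by rw [norm_two_q]; norm_num)
    refine ⟨q * (th d + 2), hqint.mul ((th_int d (Or.inr h)).add h2int),
      ⟨th d - 2, (th_int d (Or.inr h)).sub h2int, by linear_combination q * h2 + hq9⟩, ?_⟩
    rw [pi0]
    linear_combination (-(q)*(th d + 4)) * h2 + (-2) * hq9


-- ===== O-level lemmas =====

lemma inO_ofNat (n : ℕ) [n.AtLeastTwo] : inO (OfNat.ofNat n : Kd d) := by
  rw [← map_ofNat (algebraMap ℤ_[2] (Kd d)) n]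
  exact isIntegral_algebraMap

lemma isUnitO_mul {a b : Kd d} (ha : isUnitO a) (hb : isUnitO b) : isUnitO (a * b) := by
  obtain ⟨ha1, ya, hya, hya1⟩ := ha
  obtain ⟨hb1, yb, hyb, hyb1⟩ := hb
  exact ⟨IsIntegral.mul ha1 hb1, ya * yb, IsIntegral.mul hya hyb, by
    rw [show a * b * (ya * yb) = (a * ya) * (b * yb) by ring, hya1, hyb1, one_mul]⟩

lemma unitO_norm_eq_one {x : Kd d} (hx : isUnitO x) : ‖Nm d x‖ = 1 := by
  obtain ⟨h1, y, hy, hxy⟩ := hx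
  exact unitO_norm d h1 ⟨y, hy, hxy⟩

lemma nonunit_of_small {x : Kd d} (hn : ‖Nm d x‖ < 1) : ¬ isUnitO x := by
  intro hx
  rw [unitO_norm_eq_one d hx] at hn
  exact lt_irrefl 1 hn

lemma unit_sub_one_pdvd (hd : d = -1 ∨ d = -5) {π : Kd d} (hπ : IsUniformizerO π)
    {v : Kd d} (hv : isUnitO v) : pdvd π 1 (v - 1) := by
  have hn := unitO_norm_eq_one d hv
  have hsmall := Nm_sub_one_small d hd hv.1 hn
  exact hπ.2.2 (v - 1) (IsIntegral.sub hv.1 isIntegral_one) (nonunit_of_small d hsmall)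

lemma sq_sub_self_pdvd (hd : d = -1 ∨ d = -5) {π : Kd d} (hπ : IsUniformizerO π)
    {x : Kd d} (hx : inO x) : pdvd π 1 (x ^ 2 - x) := by
  have hfac : x ^ 2 - x = x * (x - 1) := by ring
  have hx1 : inO (x - 1) := IsIntegral.sub hx isIntegral_one
  have hsmall : ‖Nm d (x ^ 2 - x)‖ < 1 := by
    rw [hfac, Nm_mul, norm_mul]
    rcases lt_or_eq_of_le (Nm_int d hx) with h|h
    · calc ‖Nm d x‖ * ‖Nm d (x-1)‖ ≤ ‖Nm d x‖ * 1 :=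
            mul_le_mul_of_nonneg_left (Nm_int d hx1) (norm_nonneg _)
        _ < 1 := by rwa [mul_one]
    · have := Nm_sub_one_small d hd hx h
      calc ‖Nm d x‖ * ‖Nm d (x-1)‖ ≤ 1 * ‖Nm d (x-1)‖ :=
            mul_le_mul_of_nonneg_right (Nm_int d hx) (norm_nonneg _)
        _ < 1 := by rwa [one_mul]
  have hxx : inO (x ^ 2 - x) := by rw [hfac]; exact IsIntegral.mul hx hx1
  exact hπ.2.2 _ hxx (nonunit_of_small d hsmall)

lemma exists_unit_two (hd : d = -1 ∨ d = -5) {π : Kd d} (hπ : IsUniformizerO π) :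
    ∃ e : Kd d, isUnitO e ∧ (2 : Kd d) = π ^ 2 * e := by
  obtain ⟨hπint, hπnu, hπgen⟩ := hπ
  -- pi0 is a nonunit
  have hpi0nu : ¬ isUnitO (pi0 d) := by
    intro ⟨h1, y, hy, hxy⟩
    exact pi0_nonunit d hd ⟨y, hy, hxy⟩
  obtain ⟨t, ht, hpt⟩ := hπgen (pi0 d) (pi0_int d hd) hpi0nu
  rw [pow_one] at hpt
  obtain ⟨e0, he0int, he0u, he0eq⟩ := exists_e0 d hd
  -- t is a unit
  have hNpi0 : ‖Nm d (pi0 d)‖ = 2⁻¹ := by rw [Nm_pi0]; exact norm_one_sub_d d hd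
  have hNmul : ‖Nm d π‖ * ‖Nm d t‖ = 2⁻¹ := by
    have hh : Nm d (pi0 d) = Nm d π * Nm d t := by rw [hpt, Nm_mul]
    rw [← norm_mul, ← hh, hNpi0]
  have hNπ : ‖Nm d π‖ ≤ 2⁻¹ := by
    have hlt : ‖Nm d π‖ < 1 := by
      rcases lt_or_eq_of_le (Nm_int d hπint) with h|h
      · exact h
      · exact absurd ⟨hπint, norm_unitO d hπint h⟩ hπnu
    have := (Padic.norm_le_pow_iff_norm_lt_pow_add_one (Nm d π) (-1)).2 (by simpa using hlt)
    simpa using this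
  have hNt : ‖Nm d t‖ = 1 := by
    have h1 := Nm_int d ht
    nlinarith [norm_nonneg (Nm d π), norm_nonneg (Nm d t)]
  have htu : isUnitO t := ⟨ht, norm_unitO d ht hNt⟩
  have ht2 : isUnitO (t ^ 2) := by
    obtain ⟨_, z, hz, hz1⟩ := htu
    exact ⟨IsIntegral.pow ht 2, z ^ 2, IsIntegral.pow hz 2, by rw [← mul_pow, hz1, one_pow]⟩
  refine ⟨t ^ 2 * e0, isUnitO_mul d ht2 ⟨he0int, he0u⟩, ?_⟩
  rw [he0eq, hpt]
  ring

end Stmt4Aux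

open Stmt4Aux in
/-- s3-contraction: two units with the same `π`-coefficient can be contracted to a
variable at least three levels higher. -/
theorem stmt4 (d : ℚ_[2]) (hd : d = -1 ∨ d = -5) (π : Kd d) (hπ : IsUniformizerO π)
    (u w : Kd d) (hu : isUnitO u) (hw : isUnitO w) (huw : pdvd π 2 (u - w)) :
    ∃ α β : Kd d, inO α ∧ inO β ∧ ¬ (pdvd π 1 α ∧ pdvd π 1 β) ∧
      pdvd π 3 (u * α ^ 6 + w * β ^ 6) := by
  classical
  obtain ⟨y, hy, hyy⟩ := huw
  obtain ⟨e, he, he2⟩ := exists_unit_two d hd hπ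
  have hπint : inO π := hπ.1
  have hcO : inO (y + 1) := IsIntegral.add hy isIntegral_one
  -- g1 : e*w - 1 = π * g1
  obtain ⟨g1, hg1O, hg1e⟩ := unit_sub_one_pdvd d hd hπ (isUnitO_mul d he hw)
  rw [pow_one] at hg1e
  -- g2 : 15*w - 1 = π * g2
  have h15 : isUnitO ((15 : Kd d)) := by
    rw [show ((15 : Kd d)) = jm d 15 from (map_ofNat (jm d) 15).symm]
    have := jm_unitO d 15 (by
      rw [show ((15:ℚ_[2])) = ((15:ℕ):ℚ_[2]) by norm_num]
      exact norm_nat_odd 15 rfl)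
    exact ⟨this.1, this.2⟩
  obtain ⟨g2, hg2O, hg2e⟩ := unit_sub_one_pdvd d hd hπ (isUnitO_mul d h15 hw)
  rw [pow_one] at hg2e
  -- g3 : (y+1)^2 - (y+1) = π * g3
  obtain ⟨g3, hg3O, hg3e⟩ := sq_sub_self_pdvd d hd hπ hcO
  rw [pow_one] at hg3e
  refine ⟨1, 1 + π * (y + 1), isIntegral_one,
    IsIntegral.add isIntegral_one (IsIntegral.mul hπint hcO), ?_, ?_⟩
  · rintro ⟨⟨z, hz, h1z⟩, -⟩
    rw [pow_one] at h1z
    exact hπ.2.1 ⟨hπint, z, hz, h1z.symm⟩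
  · refine ⟨π*e*(y+1) + g1 + g2*(y+1)^2 + g3 + 3*e*w*(y+1) + 20*w*(y+1)^3
      + 15*w*π*(y+1)^4 + 6*w*π^2*(y+1)^5 + w*π^3*(y+1)^6, ?_, ?_⟩
    · have hw1 : inO w := hw.1
      have he1 : inO e := he.1
      refine IsIntegral.add (IsIntegral.add (IsIntegral.add (IsIntegral.add
        (IsIntegral.add (IsIntegral.add (IsIntegral.add (IsIntegral.add
        (IsIntegral.mul (IsIntegral.mul hπint he1) hcO) hg1O)
        (IsIntegral.mul hg2O (IsIntegral.pow hcO 2))) hg3O)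
        (IsIntegral.mul (IsIntegral.mul (IsIntegral.mul (inO_ofNat d 3) he1) hw1) hcO))
        (IsIntegral.mul (IsIntegral.mul (inO_ofNat d 20) hw1) (IsIntegral.pow hcO 3)))
        (IsIntegral.mul (IsIntegral.mul (IsIntegral.mul (inO_ofNat d 15) hw1) hπint) (IsIntegral.pow hcO 4)))
        (IsIntegral.mul (IsIntegral.mul (IsIntegral.mul (inO_ofNat d 6) hw1) (IsIntegral.pow hπint 2)) (IsIntegral.pow hcO 5)))
        (IsIntegral.mul (IsIntegral.mul hw1 (IsIntegral.pow hπint 3)) (IsIntegral.pow hcO 6))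
    · rw [one_pow, mul_one]
      linear_combination hyy + (w + 3*π*w*(y+1) + π^2*(y+1)) * he2 + π^2 * hg1e
        + π^2*(y+1)^2 * hg2e + π^2 * hg3e
end

section
/- Let 𝒪 be a complete discrete valuation ring with uniformizer π and residue field of size 2, and let v be the normalized valuation. Suppose b₁, b₂ ∈ 𝒪 are nonzero with v(b₁) = v(b₂) = k, and for each j with k+1 ≤ j ≤ k+t-1 there is a nonzero element cⱼ ∈ 𝒪 with v(cⱼ) = j. Then by repeatedly replacing two elements of equal valuation m by an element of the form b α⁶ + b' β⁶ (α, β not both in (π)) of valuation ≥ m+1, one obtains an element of valuation at least k+t. -/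
/-- One state of the slide process is obtained from another by replacing two elements of
equal valuation `m` by a contraction `b * α ^ 6 + b' * β ^ 6` (with `α, β` not both in
`(π)`) of valuation at least `m + 1`. -/
inductive Slide {R : Type*} [CommRing R] (π : R) : Multiset R → Multiset R → Prop
  | refl (S : Multiset R) : Slide π S S
  | step (S T : Multiset R) (m : ℕ) (b b' α β : R) :
      Slide π S (b ::ₘ b' ::ₘ T) →
      π ^ m ∣ b → ¬ π ^ (m + 1) ∣ b → π ^ m ∣ b' → ¬ π ^ (m + 1) ∣ b' →
      ¬ (π ∣ α ∧ π ∣ β) → π ^ (m + 1) ∣ (b * α ^ 6 + b' * β ^ 6) →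
      Slide π S ((b * α ^ 6 + b' * β ^ 6) ::ₘ T)

lemma my_contract {R : Type*} [CommRing R] (π : R) (hπ : Irreducible π)
    (hres : ∀ x : R, π ∣ x ∨ π ∣ (x - 1)) (m : ℕ) (b b' : R)
    (hb : π ^ m ∣ b) (hnb : ¬ π ^ (m+1) ∣ b) (hb' : π ^ m ∣ b') (hnb' : ¬ π ^ (m+1) ∣ b') :
    π ^ (m+1) ∣ (b + b') := by
  have h2 : π ∣ 2 := by
    rcases hres (-1) with h | h
    · exact absurd (isUnit_of_dvd_unit h isUnit_one.neg) hπ.not_isUnit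
    · have e : (-1:R) - 1 = -2 := by ring
      rw [e] at h
      exact dvd_neg.mp h
  obtain ⟨u, rfl⟩ := hb
  obtain ⟨u', rfl⟩ := hb'
  have hu : ¬ π ∣ u := fun ⟨w, hw⟩ => hnb ⟨w, by rw [hw]; ring⟩
  have hu' : ¬ π ∣ u' := fun ⟨w, hw⟩ => hnb' ⟨w, by rw [hw]; ring⟩
  have h1 : π ∣ u - 1 := (hres u).resolve_left hu
  have h1' : π ∣ u' - 1 := (hres u').resolve_left hu'
  have hsum : π ∣ u + u' := by
    have h := dvd_add (dvd_add h1 h1') h2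
    have e : (u - 1) + (u' - 1) + 2 = u + u' := by ring
    rwa [e] at h
  obtain ⟨w, hw⟩ := hsum
  exact ⟨w, by rw [pow_succ]; rw [← mul_add, hw]; ring⟩

lemma my_slide_aux {R : Type*} [CommRing R] (π : R) (hπ : Irreducible π)
    (hres : ∀ x : R, π ∣ x ∨ π ∣ (x - 1)) (c : ℕ → R) :
    ∀ (d j : ℕ) (S₀ : Multiset R) (z : R) (T : Multiset R),
      Slide π S₀ (z ::ₘ ((Finset.Ioc j (j + d)).val.map c + T)) →
      π ^ (j + 1) ∣ z →
      (∀ i ∈ Finset.Ioc j (j + d), π ^ i ∣ c i ∧ ¬ π ^ (i + 1) ∣ c i) →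
      ∃ T' z', Slide π S₀ T' ∧ z' ∈ T' ∧ π ^ (j + d + 1) ∣ z' := by
  intro d
  induction d with
  | zero =>
    intro j S₀ z T h hz _
    exact ⟨_, z, h, Multiset.mem_cons_self _ _, hz⟩
  | succ d ih =>
    intro j S₀ z T h hz hc
    have hioc : Finset.Ioc j (j + (d + 1)) = insert (j + 1) (Finset.Ioc (j + 1) (j + 1 + d)) := by
      ext x
      simp only [Finset.mem_Ioc, Finset.mem_insert]
      omega
    have hnm : (j + 1) ∉ Finset.Ioc (j + 1) (j + 1 + d) := by simp
    have hval : ((Finset.Ioc j (j + (d + 1))).val : Multiset ℕ)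
        = (j + 1) ::ₘ (Finset.Ioc (j + 1) (j + 1 + d)).val := by
      rw [hioc, Finset.insert_val_of_notMem hnm]
    have hmem : (j + 1) ∈ Finset.Ioc j (j + (d + 1)) := by simp
    have hc1 := hc (j + 1) hmem
    have hstate : (z ::ₘ ((Finset.Ioc j (j + (d + 1))).val.map c + T))
        = z ::ₘ c (j + 1) ::ₘ ((Finset.Ioc (j + 1) (j + 1 + d)).val.map c + T) := by
      rw [hval, Multiset.map_cons, Multiset.cons_add]
    rw [hstate] at h
    have hc' : ∀ i ∈ Finset.Ioc (j + 1) (j + 1 + d), π ^ i ∣ c i ∧ ¬ π ^ (i + 1) ∣ c i := by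
      intro i hi
      apply hc
      simp only [Finset.mem_Ioc] at hi ⊢
      omega
    have goalexp : j + (d + 1) + 1 = j + 1 + d + 1 := by omega
    rw [goalexp]
    by_cases hz2 : π ^ (j + 1 + 1) ∣ z
    · -- skip the level j+1
      have h' : Slide π S₀ (z ::ₘ ((Finset.Ioc (j + 1) (j + 1 + d)).val.map c
          + (c (j + 1) ::ₘ T))) := by
        have e : (z ::ₘ ((Finset.Ioc (j + 1) (j + 1 + d)).val.map c + (c (j + 1) ::ₘ T)))
            = z ::ₘ c (j + 1) ::ₘ ((Finset.Ioc (j + 1) (j + 1 + d)).val.map c + T) := by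
          rw [Multiset.add_cons]
        rw [e]
        exact h
      exact ih (j + 1) S₀ z (c (j + 1) ::ₘ T) h' hz2 hc'
    · -- contract z with c (j+1)
      have hzval : ¬ π ^ (j + 1 + 1) ∣ z := hz2
      have hcontr : π ^ (j + 1 + 1) ∣ (z * (1:R) ^ 6 + c (j + 1) * (1:R) ^ 6) := by
        simpa using my_contract π hπ hres (j + 1) z (c (j + 1)) hz hzval hc1.1 hc1.2
      have hαβ : ¬ (π ∣ (1:R) ∧ π ∣ (1:R)) := fun ⟨h1, _⟩ =>
        hπ.not_isUnit (isUnit_of_dvd_one h1)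
      have hstep := Slide.step S₀ ((Finset.Ioc (j + 1) (j + 1 + d)).val.map c + T)
        (j + 1) z (c (j + 1)) 1 1 h hz hzval hc1.1 hc1.2 hαβ hcontr
      have hz' : π ^ (j + 1 + 1) ∣ (z * (1:R) ^ 6 + c (j + 1) * (1:R) ^ 6) := hcontr
      exact ih (j + 1) S₀ _ T hstep hz' hc'

/-- The slide lemma: in a complete DVR with residue field of size `2`, starting from two
elements of valuation `k` and one element of valuation `j` for each `k+1 ≤ j ≤ k+t-1`,
repeated contraction of two elements of equal valuation produces an element of
valuation at least `k + t`. -/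
theorem stmt19 (R : Type*) [CommRing R] [IsDomain R] [IsDiscreteValuationRing R]
    [IsAdicComplete (IsLocalRing.maximalIdeal R) R]
    (π : R) (hπ : Irreducible π) (hres : ∀ x : R, π ∣ x ∨ π ∣ (x - 1))
    (k t : ℕ) (b₁ b₂ : R)
    (hb₁ : π ^ k ∣ b₁ ∧ ¬ π ^ (k + 1) ∣ b₁) (hb₂ : π ^ k ∣ b₂ ∧ ¬ π ^ (k + 1) ∣ b₂)
    (c : ℕ → R) (hc : ∀ j ∈ Finset.Ioc k (k + t - 1), π ^ j ∣ c j ∧ ¬ π ^ (j + 1) ∣ c j) :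
    ∃ (T : Multiset R) (z : R),
      Slide π (b₁ ::ₘ b₂ ::ₘ (Finset.Ioc k (k + t - 1)).val.map c) T ∧
      z ∈ T ∧ π ^ (k + t) ∣ z := by
  set S₀ := b₁ ::ₘ b₂ ::ₘ (Finset.Ioc k (k + t - 1)).val.map c with hS₀
  have hioc : Finset.Ioc k (k + t - 1) = Finset.Ioc k (k + (t - 1)) := by
    ext x; simp only [Finset.mem_Ioc]; omega
  have hcontr : π ^ (k + 1) ∣ (b₁ * (1:R) ^ 6 + b₂ * (1:R) ^ 6) := by
    simpa using my_contract π hπ hres k b₁ b₂ hb₁.1 hb₁.2 hb₂.1 hb₂.2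
  have hαβ : ¬ (π ∣ (1:R) ∧ π ∣ (1:R)) := fun ⟨h1, _⟩ =>
    hπ.not_isUnit (isUnit_of_dvd_one h1)
  have hstep := Slide.step S₀ ((Finset.Ioc k (k + t - 1)).val.map c) k b₁ b₂ 1 1
    (Slide.refl S₀) hb₁.1 hb₁.2 hb₂.1 hb₂.2 hαβ hcontr
  have hstep' : Slide π S₀ ((b₁ * (1:R) ^ 6 + b₂ * (1:R) ^ 6) ::ₘ
      ((Finset.Ioc k (k + (t - 1))).val.map c + 0)) := by
    rw [← hioc, add_zero]
    exact hstep
  have hc' : ∀ i ∈ Finset.Ioc k (k + (t - 1)), π ^ i ∣ c i ∧ ¬ π ^ (i + 1) ∣ c i := by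
    rw [← hioc]; exact hc
  obtain ⟨T', z', hT', hz'mem, hz'dvd⟩ :=
    my_slide_aux π hπ hres c (t - 1) k S₀ _ 0 hstep' hcontr hc'
  exact ⟨T', z', hT', hz'mem,
    dvd_trans (pow_dvd_pow π (by omega : k + t ≤ k + (t - 1) + 1)) hz'dvd⟩
end
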